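/- arXiv:2208.10416 — 3 statements merged into one kernel-verified Lean document; each statement's English description precedes it below -/
import Mathlib

section
/- Let ε > 0 and let S₀ = {u ∈ [0,M]^Ω : ‖λ·Wu‖₁ ≤ ‖λ·Wf‖₁}. Assume f ∈ [0,M]^Ω and |g[k] − (Af)[k]| ≤ η for every k ∈ Ω (so f ∈ F(z) for every z ∈ Ω^m, and every minimizer u^z lies in S₀). Then for every selection z ↦ u^z of minimizers, P{ z ∈ Ω^m : (1/|Ω|)·‖u^z − f‖²_{ℓ2(Ω)} ≤ ε + (16/3)·σ^{−2}·η² } ≥ 1 − N(S₀, σ²ε/(12‖A‖²_∞M)) · exp(−3·m·σ²·ε/(256·‖A‖²_∞·M²)). -/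
set_option maxHeartbeats 1000000
noncomputable section

open scoped BigOperators

namespace WFrame

/-- convolution of finitely supported sequences on an additive group -/
def fconv {G : Type*} [AddZeroClass G] (f g : G →₀ ℝ) : G →₀ ℝ :=
  f.sum fun a c => g.sum fun b d => Finsupp.single (a + b) (c * d)

/-- convolution power; `fpow f 0` is the Dirac delta at 0 -/
def fpow {G : Type*} [AddZeroClass G] (f : G →₀ ℝ) : ℕ → (G →₀ ℝ)
  | 0 => Finsupp.single 0 1
  | n + 1 => fconv (fpow f n) f

/-- the 1st order average filter p = δ₀ + δ₁ -/
def pF : ℤ →₀ ℝ := Finsupp.single 0 1 + Finsupp.single 1 1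

/-- the 1st order difference filter q = δ₀ − δ₁ -/
def qF : ℤ →₀ ℝ := Finsupp.single 0 1 - Finsupp.single 1 1

/-- j_r = 1 if r odd, 0 if r even -/
def jr (r : ℕ) : ℤ := if r % 2 = 1 then 1 else 0

/-- univariate B-spline UEP filter `a_α`; `aF r α k = aα[k]`.
`Finsupp.mapDomain (· + jr r)` shifts the sequence so that its value at `k` is the
value of the original sequence at `k - jr r`. -/
def aF (r α : ℕ) : ℤ →₀ ℝ :=
  if α = 0 then ((2:ℝ) ^ (-(r:ℤ))) • Finsupp.mapDomain (· + jr r) (fpow pF r)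
  else ((-1:ℝ) ^ (α + 1) * (2:ℝ) ^ (-(r:ℤ)) * Real.sqrt (r.choose α)) •
    Finsupp.mapDomain (· + jr r) (fconv (fpow pF (r - α)) (fpow qF α))

/-- tensor product of two finitely supported sequences -/
def tens2 (f g : ℤ →₀ ℝ) : (ℤ × ℤ) →₀ ℝ :=
  Finsupp.onFinset (f.support ×ˢ g.support) (fun k => f k.1 * g k.2) (fun k hk => by
    simp only [Finset.mem_product, Finsupp.mem_support_iff]
    exact ⟨left_ne_zero_of_mul hk, right_ne_zero_of_mul hk⟩)

/-- tensor product filter `a_{(α₁,α₂)}[(k₁,k₂)] = a_{α₁}[k₁]·a_{α₂}[k₂]` -/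
def a2 (r : ℕ) (α : ℕ × ℕ) : (ℤ × ℤ) →₀ ℝ := tens2 (aF r α.1) (aF r α.2)

/-- the band set B = {0,…,r}² \ {(0,0)} -/
def Band (r : ℕ) : Finset (ℕ × ℕ) :=
  (Finset.range (r + 1) ×ˢ Finset.range (r + 1)).erase (0, 0)

/-- upsampling: `upSample l a` equals `a[k/2^l]` on `2^l ℤ²` and `0` elsewhere -/
def upSample (l : ℕ) (a : (ℤ × ℤ) →₀ ℝ) : (ℤ × ℤ) →₀ ℝ :=
  Finsupp.mapDomain (fun k => ((2 ^ l : ℤ) * k.1, (2 ^ l : ℤ) * k.2)) a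

/-- `lowChain r l = ã_{l−1,(0,0)} ∗ ⋯ ∗ ã_{0,(0,0)}` (Dirac delta for `l = 0`) -/
def lowChain (r : ℕ) : ℕ → ((ℤ × ℤ) →₀ ℝ)
  | 0 => Finsupp.single 0 1
  | l + 1 => fconv (upSample l (a2 r (0, 0))) (lowChain r l)

/-- multi-level filter `a_{l,α} = ã_{l,α} ∗ ã_{l−1,(0,0)} ∗ ⋯ ∗ ã_{0,(0,0)}` -/
def aLvl (r l : ℕ) (α : ℕ × ℕ) : (ℤ × ℤ) →₀ ℝ :=
  fconv (upSample l (a2 r α)) (lowChain r l)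

/-- periodization `P_N(a)` of a finitely supported sequence on ℤ², as a function on
(ℤ/Nℤ)²: `per N a k = Σ_{m ≡ k (mod N)} a[m]`. -/
def per (N : ℕ) (a : (ℤ × ℤ) →₀ ℝ) (k : ZMod N × ZMod N) : ℝ :=
  ∑ m ∈ a.support, if ((m.1 : ZMod N), (m.2 : ZMod N)) = k then a m else 0

/-- periodic convolution `(a ⊛ u)[k] = Σ_{n∈Ω} P_N(a)[k−n]·u[n]` -/
def pconv (N : ℕ) [NeZero N] (a : (ℤ × ℤ) →₀ ℝ) (u : ZMod N × ZMod N → ℝ)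
    (k : ZMod N × ZMod N) : ℝ :=
  ∑ n : ZMod N × ZMod N, per N a (k - n) * u n

/-- reflection `a[−·]` -/
def refl2 (a : (ℤ × ℤ) →₀ ℝ) : (ℤ × ℤ) →₀ ℝ := Finsupp.mapDomain (fun k => -k) a

/-- wavelet frame coefficients `W_{l,α}u = a_{l,α}[−·] ⊛ u` -/
def Wc (r N : ℕ) [NeZero N] (l : ℕ) (α : ℕ × ℕ) (u : ZMod N × ZMod N → ℝ) :
    ZMod N × ZMod N → ℝ :=
  pconv N (refl2 (aLvl r l α)) u

/-- `‖Wu‖₁` -/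
def wnorm1 (r N L : ℕ) [NeZero N] (u : ZMod N × ZMod N → ℝ) : ℝ :=
  ∑ k : ZMod N × ZMod N, ∑ l ∈ Finset.range L, ∑ α ∈ Band r, |Wc r N l α u k|

/-- weighted norm `‖λ·Wu‖₁` -/
def wnormW (r N L : ℕ) [NeZero N] (lam : ℕ → ℕ × ℕ → ZMod N × ZMod N → ℝ)
    (u : ZMod N × ZMod N → ℝ) : ℝ :=
  ∑ k : ZMod N × ZMod N, ∑ l ∈ Finset.range L, ∑ α ∈ Band r,
    lam l α k * |Wc r N l α u k|

/-- discrete total variation (no wrap-around) on the grid {0,…,N−1}² -/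
def tv (N : ℕ) [NeZero N] (u : ZMod N × ZMod N → ℝ) : ℝ :=
  (∑ i ∈ Finset.range (N - 1), ∑ j ∈ Finset.range N,
      |u ((i : ZMod N) + 1, (j : ZMod N)) - u ((i : ZMod N), (j : ZMod N))|) +
  (∑ i ∈ Finset.range N, ∑ j ∈ Finset.range (N - 1),
      |u ((i : ZMod N), (j : ZMod N) + 1) - u ((i : ZMod N), (j : ZMod N))|)

/-- covering number of `S` by closed ℓ∞-balls of radius `t` with centers in `[0,Mb]^Ω` -/
def coverNum {X : Type*} (Mb t : ℝ) (S : Set (X → ℝ)) : ℕ :=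
  sInf {K : ℕ | ∃ v : Fin K → X → ℝ, (∀ j x, v j x ∈ Set.Icc 0 Mb) ∧
    ∀ u ∈ S, ∃ j, ∀ x, |u x - v j x| ≤ t}

open scoped Classical in
/-- probability of an event under i.i.d. uniform sampling of `m` points from a finite set -/
def prob {X : Type*} [Fintype X] {m : ℕ} (E : Set (Fin m → X)) : ℝ :=
  (∑ z : Fin m → X, if z ∈ E then (1:ℝ) else 0) / (Fintype.card X : ℝ) ^ m

end WFrame

namespace WFrame

section Aux

open scoped Classical

variable {X : Type*} [Fintype X]

lemma card_pos_real [Nonempty X] : (0:ℝ) < Fintype.card X := by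
  exact_mod_cast Fintype.card_pos

lemma prob_nonneg {m : ℕ} (E : Set (Fin m → X)) : 0 ≤ prob E := by
  unfold prob
  refine div_nonneg (Finset.sum_nonneg fun z _ => ?_) (by positivity)
  split_ifs <;> norm_num

lemma prob_mono [Nonempty X] {m : ℕ} {E E' : Set (Fin m → X)} (h : E ⊆ E') :
    prob E ≤ prob E' := by
  unfold prob
  have hc : (0:ℝ) < (Fintype.card X : ℝ) ^ m := by
    have := card_pos_real (X := X); positivity
  rw [div_le_div_iff_of_pos_right hc]
  refine Finset.sum_le_sum fun z _ => ?_
  by_cases hz : z ∈ E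
  · simp [hz, h hz]
  · simp only [hz, if_false]
    split_ifs <;> norm_num

lemma prob_compl [Nonempty X] {m : ℕ} (E : Set (Fin m → X)) :
    prob Eᶜ = 1 - prob E := by
  unfold prob
  have hc : (0:ℝ) < (Fintype.card X : ℝ) ^ m := by
    have := card_pos_real (X := X); positivity
  rw [eq_sub_iff_add_eq, ← add_div, div_eq_one_iff_eq hc.ne',
    ← Finset.sum_add_distrib]
  have h2 : ∑ _z : Fin m → X, (1:ℝ) = (Fintype.card X : ℝ) ^ m := by
    rw [Finset.sum_const, Finset.card_univ, nsmul_eq_mul, mul_one, Fintype.card_fun,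
      Fintype.card_fin]
    push_cast; ring
  rw [← h2]
  refine Finset.sum_congr rfl fun z _ => ?_
  by_cases hz : z ∈ E
  · rw [if_pos hz, if_neg (by simp [hz])]; ring
  · rw [if_neg hz, if_pos (by simp [hz])]; ring

lemma prob_exists_le [Nonempty X] {m K : ℕ} (P : Fin K → Set (Fin m → X)) :
    prob {z : Fin m → X | ∃ j, z ∈ P j} ≤ ∑ j, prob (P j) := by
  unfold prob
  rw [← Finset.sum_div]
  have hc : (0:ℝ) < (Fintype.card X : ℝ) ^ m := by
    have := card_pos_real (X := X); positivity
  rw [div_le_div_iff_of_pos_right hc, Finset.sum_comm]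
  refine Finset.sum_le_sum fun z _ => ?_
  by_cases hz : z ∈ {z : Fin m → X | ∃ j, z ∈ P j}
  · obtain ⟨j0, hj0⟩ := hz
    rw [if_pos ⟨j0, hj0⟩]
    have := Finset.single_le_sum (f := fun j : Fin K => if z ∈ P j then (1:ℝ) else 0)
      (fun j _ => by split_ifs <;> norm_num) (Finset.mem_univ j0)
    simpa [hj0] using this
  · rw [if_neg hz]
    exact Finset.sum_nonneg fun j _ => by split_ifs <;> norm_num

lemma sum_prod_eq_pow (g : X → ℝ) (m : ℕ) :
    ∑ z : Fin m → X, ∏ i, g (z i) = (∑ x, g x) ^ m := by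
  induction m with
  | zero => simp
  | succ n ih =>
    calc ∑ z : Fin (n + 1) → X, ∏ i, g (z i)
        = ∑ z : Fin (n + 1) → X, g (z 0) * ∏ i : Fin n, g (z i.succ) :=
          Finset.sum_congr rfl fun z _ => Fin.prod_univ_succ _
      _ = ∑ p : X × (Fin n → X), g p.1 * ∏ i : Fin n, g (p.2 i) :=
          Fintype.sum_equiv
            { toFun := fun z => (z 0, fun i => z i.succ)
              invFun := fun p => Fin.cons p.1 p.2
              left_inv := fun z => Fin.cons_self_tail z
              right_inv := fun p => by
                refine Prod.ext ?_ ?_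
                · simp
                · funext i; simp }
            _ _ (fun z => rfl)
      _ = ∑ x : X, ∑ w : Fin n → X, g x * ∏ i, g (w i) :=
          Fintype.sum_prod_type
            (f := fun p : X × (Fin n → X) => g p.1 * ∏ i : Fin n, g (p.2 i))
      _ = (∑ x : X, g x) * ∑ w : Fin n → X, ∏ i, g (w i) := by
          rw [Finset.sum_mul]
          refine Finset.sum_congr rfl fun x _ => ?_
          rw [Finset.mul_sum]
      _ = (∑ x, g x) ^ (n + 1) := by rw [ih, pow_succ]; ring

lemma prob_chernoff [Nonempty X] {m : ℕ} (Y : X → ℝ) (a : ℝ) :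
    prob {z : Fin m → X | a ≤ ∑ i, Y (z i)} ≤
      Real.exp (-a) * ((∑ x, Real.exp (Y x)) / (Fintype.card X : ℝ)) ^ m := by
  classical
  unfold prob
  have hc : (0:ℝ) < (Fintype.card X : ℝ) := card_pos_real
  have hcm : (0:ℝ) < (Fintype.card X : ℝ) ^ m := by positivity
  have hnum : (∑ z : Fin m → X, if z ∈ {z : Fin m → X | a ≤ ∑ i, Y (z i)} then (1:ℝ) else 0)
      ≤ Real.exp (-a) * (∑ x, Real.exp (Y x)) ^ m := by
    have hb : ∀ z : Fin m → X,
        (if z ∈ {z : Fin m → X | a ≤ ∑ i, Y (z i)} then (1:ℝ) else 0)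
          ≤ Real.exp (∑ i, Y (z i) - a) := by
      intro z
      split_ifs with hz
      · have h0 : (0:ℝ) ≤ ∑ i, Y (z i) - a := sub_nonneg.mpr hz
        calc (1:ℝ) = Real.exp 0 := Real.exp_zero.symm
          _ ≤ _ := Real.exp_le_exp.mpr h0
      · exact (Real.exp_pos _).le
    calc (∑ z : Fin m → X, if z ∈ {z : Fin m → X | a ≤ ∑ i, Y (z i)} then (1:ℝ) else 0)
        ≤ ∑ z : Fin m → X, Real.exp (∑ i, Y (z i) - a) :=
          Finset.sum_le_sum fun z _ => hb z
      _ = Real.exp (-a) * ∑ z : Fin m → X, ∏ i, Real.exp (Y (z i)) := by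
          rw [Finset.mul_sum]
          refine Finset.sum_congr rfl fun z _ => ?_
          rw [sub_eq_add_neg, add_comm, Real.exp_add, Real.exp_sum]
      _ = Real.exp (-a) * (∑ x, Real.exp (Y x)) ^ m := by
          congr 1
          exact sum_prod_eq_pow (fun x => Real.exp (Y x)) m
  calc (∑ z : Fin m → X, if z ∈ {z : Fin m → X | a ≤ ∑ i, Y (z i)} then (1:ℝ) else 0)
        / (Fintype.card X : ℝ) ^ m
      ≤ (Real.exp (-a) * (∑ x, Real.exp (Y x)) ^ m) / (Fintype.card X : ℝ) ^ m := by
        rw [div_le_div_iff_of_pos_right hcm]; exact hnum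
    _ = Real.exp (-a) * ((∑ x, Real.exp (Y x)) / (Fintype.card X : ℝ)) ^ m := by
        rw [div_pow, mul_div_assoc]

lemma exp_le_one_add_self_add_sq {y : ℝ} (h : |y| ≤ 1) :
    Real.exp y ≤ 1 + y + y ^ 2 := by
  have hb := Real.exp_bound h (n := 2) (by norm_num)
  have h2 : ∑ i ∈ Finset.range 2, y ^ i / i.factorial = 1 + y := by
    simp [Finset.sum_range_succ]
  rw [h2] at hb
  have h3 := (abs_sub_le_iff.mp hb).1
  have h4 : |y| ^ 2 = y ^ 2 := sq_abs y
  norm_num [Nat.factorial] at h3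
  nlinarith [sq_abs y, sq_nonneg y, h3]

lemma mgf_bound [Nonempty X] (ξ : X → ℝ) (B lam : ℝ) (hB : 0 < B)
    (h0 : ∀ x, 0 ≤ ξ x) (h1 : ∀ x, ξ x ≤ B) (hl0 : 0 ≤ lam) (hl1 : lam ≤ 1 / B) :
    (∑ x, Real.exp (lam * ((∑ x', ξ x') / (Fintype.card X : ℝ) - ξ x)))
        / (Fintype.card X : ℝ)
      ≤ Real.exp (lam ^ 2 * B * ((∑ x', ξ x') / (Fintype.card X : ℝ))) := by
  have hn : (0:ℝ) < (Fintype.card X : ℝ) := card_pos_real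
  set n : ℝ := (Fintype.card X : ℝ) with hn'
  set μ : ℝ := (∑ x', ξ x') / n with hμ
  have hSx : ∑ x, ξ x = n * μ := by rw [hμ]; field_simp
  have hμ0 : 0 ≤ μ := by
    rw [hμ]; exact div_nonneg (Finset.sum_nonneg fun x _ => h0 x) hn.le
  have hμB : μ ≤ B := by
    rw [hμ, div_le_iff₀ hn]
    calc ∑ x', ξ x' ≤ ∑ _x' : X, B := Finset.sum_le_sum fun x _ => h1 x
      _ = B * n := by rw [Finset.sum_const, Finset.card_univ, nsmul_eq_mul]; ring
  have hterm : ∀ x, Real.exp (lam * (μ - ξ x)) ≤ 1 + lam * (μ - ξ x) + (lam * (μ - ξ x)) ^ 2 := by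
    intro x
    apply exp_le_one_add_self_add_sq
    rw [abs_mul, abs_of_nonneg hl0]
    have habs : |μ - ξ x| ≤ B := by
      rw [abs_le]; constructor
      · have := h1 x; linarith
      · have := h0 x; linarith
    calc lam * |μ - ξ x| ≤ (1 / B) * B := by
          apply mul_le_mul hl1 habs (abs_nonneg _) (by positivity)
      _ = 1 := by field_simp
  have c1 : ∑ _x : X, μ ^ 2 = n * μ ^ 2 := by
    rw [Finset.sum_const, Finset.card_univ, nsmul_eq_mul]
  have c2 : ∑ x, 2 * μ * ξ x = 2 * μ * (n * μ) := by rw [← Finset.mul_sum, hSx]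
  have c3 : ∑ x, ξ x ^ 2 ≤ B * (n * μ) := by
    calc ∑ x, ξ x ^ 2 ≤ ∑ x, B * ξ x :=
          Finset.sum_le_sum fun x _ => by nlinarith [h0 x, h1 x]
      _ = B * (n * μ) := by rw [← Finset.mul_sum, hSx]
  have hsq : ∑ x, (μ - ξ x) ^ 2 ≤ B * (n * μ) := by
    have e1 : ∑ x, (μ - ξ x) ^ 2 = (∑ _x : X, μ ^ 2) - (∑ x, 2 * μ * ξ x) + ∑ x, ξ x ^ 2 := by
      rw [← Finset.sum_sub_distrib, ← Finset.sum_add_distrib]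
      exact Finset.sum_congr rfl fun x _ => by ring
    rw [e1, c1, c2]
    nlinarith [mul_nonneg hn.le (sq_nonneg μ)]
  have hlin : ∑ x, lam * (μ - ξ x) = 0 := by
    rw [← Finset.mul_sum, Finset.sum_sub_distrib, Finset.sum_const, Finset.card_univ,
      nsmul_eq_mul, hSx]
    ring
  have hsum : ∑ x, Real.exp (lam * (μ - ξ x)) ≤ n * (1 + lam ^ 2 * B * μ) := by
    calc ∑ x, Real.exp (lam * (μ - ξ x))
        ≤ ∑ x, (1 + lam * (μ - ξ x) + (lam * (μ - ξ x)) ^ 2) :=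
          Finset.sum_le_sum fun x _ => hterm x
      _ = n + ∑ x, lam * (μ - ξ x) + ∑ x, (lam * (μ - ξ x)) ^ 2 := by
          rw [Finset.sum_add_distrib, Finset.sum_add_distrib, Finset.sum_const,
            Finset.card_univ, nsmul_eq_mul, mul_one]
      _ = n + lam ^ 2 * ∑ x, (μ - ξ x) ^ 2 := by
          rw [hlin, add_zero, Finset.mul_sum]
          congr 1
          exact Finset.sum_congr rfl fun x _ => by ring
      _ ≤ n + lam ^ 2 * (B * (n * μ)) := by nlinarith [sq_nonneg lam, hsq]
      _ = n * (1 + lam ^ 2 * B * μ) := by ring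
  rw [div_le_iff₀ hn]
  calc ∑ x, Real.exp (lam * (μ - ξ x)) ≤ n * (1 + lam ^ 2 * B * μ) := hsum
    _ ≤ Real.exp (lam ^ 2 * B * μ) * n := by
        have := Real.add_one_le_exp (lam ^ 2 * B * μ)
        nlinarith [hn]

lemma prob_conc [Nonempty X] {m : ℕ} (hm : 1 ≤ m)
    (ξ : X → ℝ) (B : ℝ) (hB : 0 < B) (h0 : ∀ x, 0 ≤ ξ x) (h1 : ∀ x, ξ x ≤ B)
    (e : ℝ) (he : 0 < e) :
    prob {z : Fin m → X |
        (4:ℝ)/3 * ((∑ i, ξ (z i)) / m) + 8/3 * e < (∑ x, ξ x) / (Fintype.card X : ℝ)}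
      ≤ Real.exp (-(m * e) / (8 * B)) := by
  have hn : (0:ℝ) < (Fintype.card X : ℝ) := card_pos_real
  have hmR : (1:ℝ) ≤ (m : ℝ) := by exact_mod_cast hm
  have hm0 : (0:ℝ) < (m : ℝ) := by linarith
  set n : ℝ := (Fintype.card X : ℝ) with hn'
  set μ : ℝ := (∑ x, ξ x) / n with hμ
  have hμ0 : 0 ≤ μ := div_nonneg (Finset.sum_nonneg fun x _ => h0 x) hn.le
  set t : ℝ := Real.sqrt (e * (μ + e)) with htdef
  have ht2 : t ^ 2 = e * (μ + e) := Real.sq_sqrt (by positivity)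
  have ht0 : 0 < t := Real.sqrt_pos.mpr (by positivity)
  have hte : e ≤ t := by
    rw [htdef]
    calc e = Real.sqrt (e ^ 2) := (Real.sqrt_sq he.le).symm
      _ ≤ _ := Real.sqrt_le_sqrt (by nlinarith)
  have htub : t ≤ μ / 4 + 2 * e := by
    rw [htdef]
    calc Real.sqrt (e * (μ + e)) ≤ Real.sqrt ((μ / 4 + 2 * e) ^ 2) :=
          Real.sqrt_le_sqrt (by nlinarith)
      _ = μ / 4 + 2 * e := Real.sqrt_sq (by positivity)
  set lam : ℝ := t / (B * (2 * μ + t)) with hlam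
  have hD : 0 < B * (2 * μ + t) := by positivity
  have hlam0 : 0 ≤ lam := by positivity
  have hlamB : lam ≤ 1 / B := by
    rw [hlam, div_le_div_iff₀ hD hB]
    nlinarith
  have hsub : {z : Fin m → X |
        (4:ℝ)/3 * ((∑ i, ξ (z i)) / m) + 8/3 * e < (∑ x, ξ x) / n}
      ⊆ {z : Fin m → X | lam * ((m : ℝ) * t) ≤ ∑ i, lam * (μ - ξ (z i))} := by
    intro z hz
    simp only [Set.mem_setOf_eq] at hz ⊢
    rw [← hμ] at hz
    have hzsum : ∑ i, lam * (μ - ξ (z i)) = lam * ((m : ℝ) * μ - ∑ i, ξ (z i)) := by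
      rw [← Finset.mul_sum, Finset.sum_sub_distrib, Finset.sum_const, Finset.card_univ,
        Fintype.card_fin, nsmul_eq_mul]
    rw [hzsum]
    have hS : (∑ i, ξ (z i)) / m < 3/4 * μ - 2 * e := by linarith
    have hS' : ∑ i, ξ (z i) < (m : ℝ) * (3/4 * μ - 2 * e) := by
      rw [div_lt_iff₀ hm0] at hS; linarith [hS]
    have hkey : (m : ℝ) * t ≤ (m : ℝ) * μ - ∑ i, ξ (z i) := by
      nlinarith [htub]
    exact mul_le_mul_of_nonneg_left hkey hlam0
  calc prob {z : Fin m → X |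
        (4:ℝ)/3 * ((∑ i, ξ (z i)) / m) + 8/3 * e < (∑ x, ξ x) / n}
      ≤ prob {z : Fin m → X | lam * ((m : ℝ) * t) ≤ ∑ i, lam * (μ - ξ (z i))} :=
        prob_mono hsub
    _ ≤ Real.exp (-(lam * ((m : ℝ) * t))) *
        ((∑ x, Real.exp (lam * (μ - ξ x))) / n) ^ m :=
        prob_chernoff (fun x => lam * (μ - ξ x)) (lam * ((m : ℝ) * t))
    _ ≤ Real.exp (-(lam * ((m : ℝ) * t))) * (Real.exp (lam ^ 2 * B * μ)) ^ m := by
        have hmgf := mgf_bound ξ B lam hB h0 h1 hlam0 hlamB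
        rw [← hμ] at hmgf
        have hbase : 0 ≤ (∑ x, Real.exp (lam * (μ - ξ x))) / n :=
          div_nonneg (Finset.sum_nonneg fun x _ => (Real.exp_pos _).le) hn.le
        exact mul_le_mul_of_nonneg_left (pow_le_pow_left₀ hbase hmgf m) (Real.exp_pos _).le
    _ = Real.exp ((m : ℝ) * (lam ^ 2 * B * μ - lam * t)) := by
        rw [← Real.exp_nat_mul, ← Real.exp_add]
        congr 1
        ring
    _ ≤ Real.exp (-(m * e) / (8 * B)) := by
        apply Real.exp_le_exp.mpr
        have heq : lam * t - lam ^ 2 * B * μ = t ^ 2 * (μ + t) / (B * (2 * μ + t) ^ 2) := by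
          rw [hlam]; field_simp; ring
        have key7 : (2 * μ + t) ^ 2 ≤ 8 * ((μ + e) * (μ + t)) := by
          nlinarith [mul_le_mul_of_nonneg_left htub ht0.le, mul_nonneg hμ0 ht0.le,
            mul_nonneg he.le ht0.le, mul_nonneg he.le hμ0, sq_nonneg μ]
        have ht2' : t ^ 2 * (μ + t) = e * ((μ + e) * (μ + t)) := by rw [ht2]; ring
        have key8 : e * (2 * μ + t) ^ 2 ≤ 8 * (t ^ 2 * (μ + t)) := by
          rw [ht2']
          nlinarith [mul_le_mul_of_nonneg_left key7 he.le]
        have hkey : e / (8 * B) ≤ lam * t - lam ^ 2 * B * μ := by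
          rw [heq, div_le_div_iff₀ (by positivity) (by positivity)]
          nlinarith [mul_le_mul_of_nonneg_left key8 hB.le]
        have h8 : -(m * e) / (8 * B) = (m : ℝ) * (-(e / (8 * B))) := by ring
        rw [h8]
        have := mul_le_mul_of_nonneg_left hkey (by linarith : (0:ℝ) ≤ (m:ℝ))
        nlinarith [this]

lemma cover_exists (Mb t : ℝ) (hM : 0 ≤ Mb) (ht : 0 < t) (S : Set (X → ℝ))
    (hS : ∀ u ∈ S, ∀ x, u x ∈ Set.Icc (0:ℝ) Mb) :
    ∃ v : Fin (coverNum Mb t S) → X → ℝ,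
      (∀ j x, v j x ∈ Set.Icc (0:ℝ) Mb) ∧ ∀ u ∈ S, ∃ j, ∀ x, |u x - v j x| ≤ t := by
  classical
  set d : ℕ := ⌊Mb / t⌋₊ + 1 with hd
  set K0 : ℕ := Fintype.card (X → Fin d) with hK0
  have hne : {K : ℕ | ∃ v : Fin K → X → ℝ, (∀ j x, v j x ∈ Set.Icc 0 Mb) ∧
      ∀ u ∈ S, ∃ j, ∀ x, |u x - v j x| ≤ t}.Nonempty := by
    refine ⟨K0, ?_⟩
    set eqv : (X → Fin d) ≃ Fin K0 := Fintype.equivFin (X → Fin d) with heqv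
    refine ⟨fun j x => min (t * ((eqv.symm j) x : ℕ)) Mb, ?_, ?_⟩
    · intro j x
      constructor
      · apply le_min (by positivity) hM
      · exact min_le_right _ _
    · intro u hu
      have hux : ∀ x, u x ∈ Set.Icc (0:ℝ) Mb := hS u hu
      have hflt : ∀ x, ⌊u x / t⌋₊ < d := by
        intro x
        have h1 : u x / t ≤ Mb / t := by gcongr; exact (hux x).2
        have h2 : ⌊u x / t⌋₊ ≤ ⌊Mb / t⌋₊ := Nat.floor_le_floor h1
        omega
      set φ : X → Fin d := fun x => (⟨⌊u x / t⌋₊, hflt x⟩ : Fin d) with hφ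
      refine ⟨eqv φ, fun x => ?_⟩
      have hsymm : eqv.symm (eqv φ) = φ := Equiv.symm_apply_apply _ _
      simp only [hsymm]
      have hdiv0 : 0 ≤ u x / t := div_nonneg (hux x).1 ht.le
      have hlo : t * (⌊u x / t⌋₊ : ℝ) ≤ u x := by
        have := Nat.floor_le hdiv0
        calc t * (⌊u x / t⌋₊ : ℝ) ≤ t * (u x / t) := by
              exact mul_le_mul_of_nonneg_left this ht.le
          _ = u x := by field_simp
      have hhi : u x < t * ((⌊u x / t⌋₊ : ℝ) + 1) := by
        have := Nat.lt_floor_add_one (u x / t)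
        calc u x = t * (u x / t) := by field_simp
          _ < t * ((⌊u x / t⌋₊ : ℝ) + 1) := by
              exact mul_lt_mul_of_pos_left this ht
      have hval : ((φ x : Fin d) : ℕ) = ⌊u x / t⌋₊ := rfl
      have hmin : min (t * (((φ x : Fin d) : ℕ) : ℝ)) Mb = t * (⌊u x / t⌋₊ : ℝ) := by
        rw [hval]
        apply min_eq_left
        exact hlo.trans (hux x).2
      rw [hmin, abs_le]
      constructor
      · nlinarith
      · nlinarith
  have := Nat.sInf_mem hne
  exact this

end Aux


/-- Theorem 2.1 — error probability bound via covering numbers.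
`A` is a linear operator on `ℝ^Ω` (as a continuous linear map for the ℓ∞ norm, so that
`‖A‖` is the ℓ∞ operator norm), `σ > 0` satisfies `σ‖v‖₂ ≤ ‖Av‖₂`, the data satisfy
`|g[k] − (Af)[k]| ≤ η` for all `k`, and `usel` is any selection of minimizers of
`‖λ·W·‖₁` over `F(z)`.  Then with probability (over i.i.d. uniform samples `z ∈ Ω^m`)
at least `1 − N(S₀, σ²ε/(12‖A‖²M))·exp(−3mσ²ε/(256‖A‖²M²))` one has
`(1/|Ω|)‖u^z − f‖₂² ≤ ε + (16/3)σ⁻²η²`. -/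
theorem stmt0 (N : ℕ) (hN : 2 ≤ N) [NeZero N] (r : ℕ) (hr : 1 ≤ r) (L : ℕ) (hL : 1 ≤ L)
    (M : ℝ) (hM : 0 < M)
    (lam : ℕ → ℕ × ℕ → ZMod N × ZMod N → ℝ) (hlam : ∀ l α k, 0 ≤ lam l α k)
    (A : (ZMod N × ZMod N → ℝ) →L[ℝ] (ZMod N × ZMod N → ℝ)) (hA : 0 < ‖A‖)
    (σ : ℝ) (hσ : 0 < σ)
    (hσA : ∀ v : ZMod N × ZMod N → ℝ,
      σ * Real.sqrt (∑ k, v k ^ 2) ≤ Real.sqrt (∑ k, A v k ^ 2))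
    (g : ZMod N × ZMod N → ℝ) (η : ℝ) (hη : 0 ≤ η)
    (f : ZMod N × ZMod N → ℝ) (hfM : ∀ k, f k ∈ Set.Icc (0 : ℝ) M)
    (hgf : ∀ k, |g k - A f k| ≤ η)
    (m : ℕ) (hm : 1 ≤ m)
    (usel : (Fin m → ZMod N × ZMod N) → (ZMod N × ZMod N → ℝ))
    (husel : ∀ z : Fin m → ZMod N × ZMod N,
      (∀ k, usel z k ∈ Set.Icc (0 : ℝ) M) ∧
      (1 / (m : ℝ)) * ∑ i, (A (usel z) (z i) - g (z i)) ^ 2 ≤ η ^ 2 ∧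
      ∀ u : ZMod N × ZMod N → ℝ, (∀ k, u k ∈ Set.Icc (0 : ℝ) M) →
        (1 / (m : ℝ)) * ∑ i, (A u (z i) - g (z i)) ^ 2 ≤ η ^ 2 →
        wnormW r N L lam (usel z) ≤ wnormW r N L lam u)
    (ε : ℝ) (hε : 0 < ε) :
    prob {z : Fin m → ZMod N × ZMod N |
        (1 / ((N : ℝ) ^ 2)) * ∑ k, (usel z k - f k) ^ 2 ≤ ε + (16 / 3) * η ^ 2 / σ ^ 2} ≥
      1 - (coverNum M (σ ^ 2 * ε / (12 * ‖A‖ ^ 2 * M))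
            {u : ZMod N × ZMod N → ℝ | (∀ k, u k ∈ Set.Icc (0 : ℝ) M) ∧
              wnormW r N L lam u ≤ wnormW r N L lam f} : ℝ) *
          Real.exp (-(3 * m * σ ^ 2 * ε) / (256 * ‖A‖ ^ 2 * M ^ 2)) := by
  have hM0 : M ≠ 0 := ne_of_gt hM
  have hAne : ‖A‖ ≠ 0 := ne_of_gt hA
  haveI hXne : Nonempty (ZMod N × ZMod N) := ⟨(0, 0)⟩
  have hn : (0:ℝ) < (Fintype.card (ZMod N × ZMod N) : ℝ) := card_pos_real
  have hcard : ((Fintype.card (ZMod N × ZMod N) : ℝ)) = (N:ℝ) ^ 2 := by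
    rw [Fintype.card_prod, ZMod.card]
    push_cast
    ring
  have hσ2 : (0:ℝ) < σ ^ 2 := by positivity
  have hm0 : (0:ℝ) < (m : ℝ) := by
    have : (1:ℝ) ≤ (m : ℝ) := by exact_mod_cast hm
    linarith
  set t0 : ℝ := σ ^ 2 * ε / (12 * ‖A‖ ^ 2 * M) with ht0def
  have ht0 : 0 < t0 := by positivity
  set S0 : Set (ZMod N × ZMod N → ℝ) := {u : ZMod N × ZMod N → ℝ |
      (∀ k, u k ∈ Set.Icc (0 : ℝ) M) ∧ wnormW r N L lam u ≤ wnormW r N L lam f} with hS0def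
  obtain ⟨v, hvIcc, hvcov⟩ := cover_exists M t0 hM.le ht0 S0 (fun u hu => hu.1)
  set B : ℝ := ‖A‖ ^ 2 * M ^ 2 with hBdef
  have hB : 0 < B := by positivity
  set e' : ℝ := 3 * σ ^ 2 * ε / 32 with he'def
  have he' : 0 < e' := by positivity
  have h2c : 2 * (‖A‖ * M) * (‖A‖ * t0) = σ ^ 2 * ε / 6 := by
    rw [ht0def]
    field_simp
    ring
  -- general helpers
  have hsqle : ∀ p c : ℝ, |p| ≤ c → p ^ 2 ≤ c ^ 2 := by
    intro p c h
    have h' := abs_le.mp h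
    nlinarith [h'.1, h'.2]
  have hquad : ∀ p q c1 c2 : ℝ, |p| ≤ c2 → |q| ≤ c2 → |p - q| ≤ c1 →
      p ^ 2 ≤ q ^ 2 + 2 * c2 * c1 := by
    intro p q c1 c2 hp hq hpq
    have h1 := abs_le.mp hp
    have h2 := abs_le.mp hq
    have h3 := abs_le.mp hpq
    have hs1 : p + q ≤ 2 * c2 := by linarith [h1.2, h2.2]
    have hs2 : -(2 * c2) ≤ p + q := by linarith [h1.1, h2.1]
    nlinarith [h3.1, h3.2, hs1, hs2]
  have hAlip : ∀ (u1 u2 : ZMod N × ZMod N → ℝ) (c : ℝ), 0 ≤ c →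
      (∀ x, |u1 x - u2 x| ≤ c) → ∀ k, |A u1 k - A u2 k| ≤ ‖A‖ * c := by
    intro u1 u2 c hc h k
    have h1 : A u1 k - A u2 k = (A (u1 - u2)) k := by rw [map_sub]; rfl
    rw [h1, ← Real.norm_eq_abs]
    calc ‖(A (u1 - u2)) k‖ ≤ ‖A (u1 - u2)‖ := norm_le_pi_norm _ k
      _ ≤ ‖A‖ * ‖u1 - u2‖ := A.le_opNorm _
      _ ≤ ‖A‖ * c := by
          refine mul_le_mul_of_nonneg_left ?_ (norm_nonneg _)
          rw [pi_norm_le_iff_of_nonneg hc]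
          intro x
          rw [Pi.sub_apply, Real.norm_eq_abs]
          exact h x
  have hIccDiff : ∀ (u1 u2 : ZMod N × ZMod N → ℝ), (∀ k, u1 k ∈ Set.Icc (0:ℝ) M) →
      (∀ k, u2 k ∈ Set.Icc (0:ℝ) M) → ∀ x, |u1 x - u2 x| ≤ M := by
    intro u1 u2 h1 h2 x
    have a1 := h1 x
    have a2 := h2 x
    rw [abs_le]
    exact ⟨by linarith [a1.1, a2.2], by linarith [a1.2, a2.1]⟩
  set ξ : Fin (coverNum M t0 S0) → ZMod N × ZMod N → ℝ :=
    fun j k => (A (v j) k - A f k) ^ 2 with hξdef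
  have habsV : ∀ j k, |A (v j) k - A f k| ≤ ‖A‖ * M := fun j =>
    hAlip (v j) f M hM.le (hIccDiff (v j) f (fun k => hvIcc j k) hfM)
  have hξ0 : ∀ j x, 0 ≤ ξ j x := fun j x => sq_nonneg _
  have hξB : ∀ j x, ξ j x ≤ B := by
    intro j x
    calc ξ j x ≤ (‖A‖ * M) ^ 2 := hsqle _ _ (habsV j x)
      _ = B := by rw [hBdef]; ring
  set P : Fin (coverNum M t0 S0) → Set (Fin m → ZMod N × ZMod N) := fun j =>
    {z : Fin m → ZMod N × ZMod N |
      (4:ℝ)/3 * ((∑ i, ξ j (z i)) / m) + 8/3 * e' <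
        (∑ x, ξ j x) / (Fintype.card (ZMod N × ZMod N) : ℝ)} with hPdef
  set G : Set (Fin m → ZMod N × ZMod N) := {z : Fin m → ZMod N × ZMod N |
      ∀ j, (∑ x, ξ j x) / (Fintype.card (ZMod N × ZMod N) : ℝ) ≤
        (4:ℝ)/3 * ((∑ i, ξ j (z i)) / m) + 8/3 * e'} with hGdef
  -- probability of the bad event
  have hGc : prob Gᶜ ≤ (coverNum M t0 S0 : ℝ) *
      Real.exp (-(3 * m * σ ^ 2 * ε) / (256 * ‖A‖ ^ 2 * M ^ 2)) := by
    have hsub : Gᶜ ⊆ {z : Fin m → ZMod N × ZMod N | ∃ j, z ∈ P j} := by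
      intro z hz
      simp only [hGdef, Set.mem_compl_iff, Set.mem_setOf_eq, not_forall, not_le] at hz
      obtain ⟨j, hj⟩ := hz
      exact ⟨j, hj⟩
    have hexp : Real.exp (-(m * e') / (8 * B)) =
        Real.exp (-(3 * m * σ ^ 2 * ε) / (256 * ‖A‖ ^ 2 * M ^ 2)) := by
      congr 1
      rw [he'def, hBdef]
      field_simp
      ring
    calc prob Gᶜ ≤ prob {z : Fin m → ZMod N × ZMod N | ∃ j, z ∈ P j} := prob_mono hsub
      _ ≤ ∑ j, prob (P j) := prob_exists_le P
      _ ≤ ∑ _j : Fin (coverNum M t0 S0), Real.exp (-(m * e') / (8 * B)) :=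
          Finset.sum_le_sum fun j _ => prob_conc hm (ξ j) B hB (hξ0 j) (hξB j) e' he'
      _ = (coverNum M t0 S0 : ℝ) * Real.exp (-(m * e') / (8 * B)) := by
          rw [Finset.sum_const, Finset.card_univ, Fintype.card_fin, nsmul_eq_mul]
      _ = _ := by rw [hexp]
  -- the good event implies the error bound
  have hGsub : G ⊆ {z : Fin m → ZMod N × ZMod N |
      (1 / ((N : ℝ) ^ 2)) * ∑ k, (usel z k - f k) ^ 2 ≤ ε + (16 / 3) * η ^ 2 / σ ^ 2} := by
    intro z hz
    simp only [hGdef, Set.mem_setOf_eq] at hz ⊢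
    obtain ⟨huIcc, hufeas, humin⟩ := husel z
    have hffeas : (1 / (m : ℝ)) * ∑ i, (A f (z i) - g (z i)) ^ 2 ≤ η ^ 2 := by
      have hterm : ∀ i : Fin m, (A f (z i) - g (z i)) ^ 2 ≤ η ^ 2 := by
        intro i
        refine hsqle _ _ ?_
        rw [abs_sub_comm]
        exact hgf (z i)
      calc (1 / (m : ℝ)) * ∑ i, (A f (z i) - g (z i)) ^ 2
          ≤ (1 / (m : ℝ)) * ∑ _i : Fin m, η ^ 2 :=
            mul_le_mul_of_nonneg_left (Finset.sum_le_sum fun i _ => hterm i) (by positivity)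
        _ = η ^ 2 := by
            rw [Finset.sum_const, Finset.card_univ, Fintype.card_fin, nsmul_eq_mul]
            field_simp
    have huS0 : usel z ∈ S0 := ⟨huIcc, humin f hfM hffeas⟩
    obtain ⟨j, hj⟩ := hvcov (usel z) huS0
    have habsU : ∀ k, |A (usel z) k - A f k| ≤ ‖A‖ * M :=
      hAlip (usel z) f M hM.le (hIccDiff (usel z) f huIcc hfM)
    have habsD : ∀ k, |A (usel z) k - A (v j) k| ≤ ‖A‖ * t0 :=
      hAlip (usel z) (v j) t0 ht0.le hj
    have hpt1 : ∀ k, (A (usel z) k - A f k) ^ 2 ≤ ξ j k + σ ^ 2 * ε / 6 := by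
      intro k
      have hd : |(A (usel z) k - A f k) - (A (v j) k - A f k)| ≤ ‖A‖ * t0 := by
        have he : (A (usel z) k - A f k) - (A (v j) k - A f k)
            = A (usel z) k - A (v j) k := by ring
        rw [he]
        exact habsD k
      have := hquad (A (usel z) k - A f k) (A (v j) k - A f k) (‖A‖ * t0) (‖A‖ * M)
        (habsU k) (habsV j k) hd
      calc (A (usel z) k - A f k) ^ 2
          ≤ (A (v j) k - A f k) ^ 2 + 2 * (‖A‖ * M) * (‖A‖ * t0) := this
        _ = ξ j k + σ ^ 2 * ε / 6 := by rw [h2c]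
    have hpt2 : ∀ k, ξ j k ≤ (A (usel z) k - A f k) ^ 2 + σ ^ 2 * ε / 6 := by
      intro k
      have hd : |(A (v j) k - A f k) - (A (usel z) k - A f k)| ≤ ‖A‖ * t0 := by
        have he : (A (v j) k - A f k) - (A (usel z) k - A f k)
            = -(A (usel z) k - A (v j) k) := by ring
        rw [he, abs_neg]
        exact habsD k
      have := hquad (A (v j) k - A f k) (A (usel z) k - A f k) (‖A‖ * t0) (‖A‖ * M)
        (habsV j k) (habsU k) hd
      calc ξ j k = (A (v j) k - A f k) ^ 2 := rfl
        _ ≤ (A (usel z) k - A f k) ^ 2 + 2 * (‖A‖ * M) * (‖A‖ * t0) := this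
        _ = (A (usel z) k - A f k) ^ 2 + σ ^ 2 * ε / 6 := by rw [h2c]
    set n' : ℝ := (Fintype.card (ZMod N × ZMod N) : ℝ) with hn'def
    have f2 : (∑ k, (A (usel z) k - A f k) ^ 2) / n' ≤ (∑ k, ξ j k) / n' + σ ^ 2 * ε / 6 := by
      have hsum : ∑ k, (A (usel z) k - A f k) ^ 2 ≤ (∑ k, ξ j k) + n' * (σ ^ 2 * ε / 6) := by
        calc ∑ k, (A (usel z) k - A f k) ^ 2 ≤ ∑ k, (ξ j k + σ ^ 2 * ε / 6) :=
              Finset.sum_le_sum fun k _ => hpt1 k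
          _ = (∑ k, ξ j k) + n' * (σ ^ 2 * ε / 6) := by
              rw [Finset.sum_add_distrib, Finset.sum_const, Finset.card_univ, nsmul_eq_mul]
      calc (∑ k, (A (usel z) k - A f k) ^ 2) / n'
          ≤ ((∑ k, ξ j k) + n' * (σ ^ 2 * ε / 6)) / n' :=
            (div_le_div_iff_of_pos_right hn).mpr hsum
        _ = (∑ k, ξ j k) / n' + σ ^ 2 * ε / 6 := by
            rw [add_div, mul_div_cancel_left₀ _ hn.ne']
    have f4 : (∑ i, ξ j (z i)) / m ≤ (∑ i, (A (usel z) (z i) - A f (z i)) ^ 2) / m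
        + σ ^ 2 * ε / 6 := by
      have hsum : ∑ i, ξ j (z i) ≤ (∑ i, (A (usel z) (z i) - A f (z i)) ^ 2)
          + (m : ℝ) * (σ ^ 2 * ε / 6) := by
        calc ∑ i, ξ j (z i) ≤ ∑ i, ((A (usel z) (z i) - A f (z i)) ^ 2 + σ ^ 2 * ε / 6) :=
              Finset.sum_le_sum fun i _ => hpt2 (z i)
          _ = (∑ i, (A (usel z) (z i) - A f (z i)) ^ 2) + (m : ℝ) * (σ ^ 2 * ε / 6) := by
              rw [Finset.sum_add_distrib, Finset.sum_const, Finset.card_univ,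
                Fintype.card_fin, nsmul_eq_mul]
      calc (∑ i, ξ j (z i)) / m
          ≤ ((∑ i, (A (usel z) (z i) - A f (z i)) ^ 2) + (m : ℝ) * (σ ^ 2 * ε / 6)) / m :=
            (div_le_div_iff_of_pos_right hm0).mpr hsum
        _ = (∑ i, (A (usel z) (z i) - A f (z i)) ^ 2) / m + σ ^ 2 * ε / 6 := by
            rw [add_div, mul_div_cancel_left₀ _ hm0.ne']
    have f5 : (∑ i, (A (usel z) (z i) - A f (z i)) ^ 2) / m ≤ 4 * η ^ 2 := by
      have hpt : ∀ i : Fin m, (A (usel z) (z i) - A f (z i)) ^ 2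
          ≤ 2 * (A (usel z) (z i) - g (z i)) ^ 2 + 2 * η ^ 2 := by
        intro i
        have hb := hsqle (g (z i) - A f (z i)) η (hgf (z i))
        nlinarith [sq_nonneg (A (usel z) (z i) - g (z i) - (g (z i) - A f (z i)))]
      have hsum : ∑ i, (A (usel z) (z i) - A f (z i)) ^ 2
          ≤ 2 * (∑ i, (A (usel z) (z i) - g (z i)) ^ 2) + (m : ℝ) * (2 * η ^ 2) := by
        calc ∑ i, (A (usel z) (z i) - A f (z i)) ^ 2
            ≤ ∑ i, (2 * (A (usel z) (z i) - g (z i)) ^ 2 + 2 * η ^ 2) :=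
              Finset.sum_le_sum fun i _ => hpt i
          _ = 2 * (∑ i, (A (usel z) (z i) - g (z i)) ^ 2) + (m : ℝ) * (2 * η ^ 2) := by
              rw [Finset.sum_add_distrib, Finset.sum_const, Finset.card_univ,
                Fintype.card_fin, nsmul_eq_mul, Finset.mul_sum]
      have hfe : (∑ i, (A (usel z) (z i) - g (z i)) ^ 2) ≤ (m : ℝ) * η ^ 2 := by
        have := hufeas
        rw [one_div, inv_mul_le_iff₀ hm0] at this
        linarith [this]
      calc (∑ i, (A (usel z) (z i) - A f (z i)) ^ 2) / m
          ≤ (2 * ((m : ℝ) * η ^ 2) + (m : ℝ) * (2 * η ^ 2)) / m := by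
            refine (div_le_div_iff_of_pos_right hm0).mpr ?_
            calc ∑ i, (A (usel z) (z i) - A f (z i)) ^ 2
                ≤ 2 * (∑ i, (A (usel z) (z i) - g (z i)) ^ 2) + (m : ℝ) * (2 * η ^ 2) := hsum
              _ ≤ 2 * ((m : ℝ) * η ^ 2) + (m : ℝ) * (2 * η ^ 2) := by linarith [hfe]
        _ = 4 * η ^ 2 := by field_simp; ring
    have f1 : σ ^ 2 * ((∑ k, (usel z k - f k) ^ 2) / n')
        ≤ (∑ k, (A (usel z) k - A f k) ^ 2) / n' := by
      have h1 := hσA (usel z - f)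
      have h2 : ∑ k, (usel z - f) k ^ 2 = ∑ k, (usel z k - f k) ^ 2 :=
        Finset.sum_congr rfl fun k _ => by rw [Pi.sub_apply]
      have h3 : ∑ k, (A (usel z - f)) k ^ 2 = ∑ k, (A (usel z) k - A f k) ^ 2 :=
        Finset.sum_congr rfl fun k _ => by rw [map_sub, Pi.sub_apply]
      rw [h2, h3] at h1
      have hs1 : (0:ℝ) ≤ ∑ k, (usel z k - f k) ^ 2 :=
        Finset.sum_nonneg fun k _ => sq_nonneg _
      have hs2 : (0:ℝ) ≤ ∑ k, (A (usel z) k - A f k) ^ 2 :=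
        Finset.sum_nonneg fun k _ => sq_nonneg _
      have h4 : σ ^ 2 * (∑ k, (usel z k - f k) ^ 2) ≤ ∑ k, (A (usel z) k - A f k) ^ 2 := by
        have hmm := mul_self_le_mul_self
          (mul_nonneg hσ.le (Real.sqrt_nonneg _)) h1
        have e1 := Real.sq_sqrt hs1
        have e2 := Real.sq_sqrt hs2
        nlinarith [hmm, e1, e2]
      calc σ ^ 2 * ((∑ k, (usel z k - f k) ^ 2) / n')
          = (σ ^ 2 * (∑ k, (usel z k - f k) ^ 2)) / n' := by ring
        _ ≤ (∑ k, (A (usel z) k - A f k) ^ 2) / n' :=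
            (div_le_div_iff_of_pos_right hn).mpr h4
    have hzj := hz j
    have total : σ ^ 2 * ((∑ k, (usel z k - f k) ^ 2) / n')
        ≤ σ ^ 2 * ε + 16 / 3 * η ^ 2 := by
      have hεσ : (0:ℝ) ≤ σ ^ 2 * ε := by positivity
      nlinarith [f1, f2, hzj, f4, f5, he'def, hεσ]
    calc (1 / ((N : ℝ) ^ 2)) * ∑ k, (usel z k - f k) ^ 2
        = (σ ^ 2 * ((∑ k, (usel z k - f k) ^ 2) / n')) / σ ^ 2 := by
          rw [hcard]
          field_simp
        _ ≤ (σ ^ 2 * ε + 16 / 3 * η ^ 2) / σ ^ 2 :=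
          (div_le_div_iff_of_pos_right hσ2).mpr total
        _ = ε + 16 / 3 * η ^ 2 / σ ^ 2 := by field_simp
  have h1 : prob G ≤ prob {z : Fin m → ZMod N × ZMod N |
      (1 / ((N : ℝ) ^ 2)) * ∑ k, (usel z k - f k) ^ 2 ≤ ε + (16 / 3) * η ^ 2 / σ ^ 2} :=
    prob_mono hGsub
  have h2 : prob Gᶜ = 1 - prob G := prob_compl G
  have h3 : 1 - (coverNum M t0 S0 : ℝ) *
      Real.exp (-(3 * m * σ ^ 2 * ε) / (256 * ‖A‖ ^ 2 * M ^ 2)) ≤ prob G := by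
    linarith [hGc, h2]
  linarith [h1, h3]


end WFrame
end
end

section
/- Assume M ≥ 1, and let C_W ≥ 1 be a constant such that ‖∇u‖₁ ≤ C_W·‖Wu‖₁ for all u : Ω → ℝ. Assume the weights satisfy λ_{l,α}[k] = 2^{β·Υ(l,α,k)} with β ∈ [−1,1], where Υ takes values in {1,2,3,…} and Υ(l,α,k) ≤ log₂N for all (l,α,k), and assume f ∈ [0,M]^Ω satisfies ‖λ·Wf‖₁ ≤ C_f·|Ω|^{1/2} with C_f ≥ 1. Let S₀ = {u ∈ [0,M]^Ω : ‖λ·Wu‖₁ ≤ ‖λ·Wf‖₁}. Then for every a ≥ 1 and every radius t ≥ |Ω|^{−a}, ln N(S₀, t) ≤ (C_a/t)·|Ω|^{b/2}·log₂|Ω|, where b = max{1−β, 1} and C_a = 20·M·(4a+b)·C_W·C_f·(1 + C_W·C_f). -/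
noncomputable section

open scoped BigOperators

/-- truncation toward zero -/
def qz (x : ℝ) : ℤ := if 0 ≤ x then ⌊x⌋ else -⌊-x⌋

lemma abs_qz_add (x : ℝ) : |(qz x : ℝ)| + |x - (qz x : ℝ)| = |x| := by
  unfold qz
  rcases le_or_gt 0 x with h | h
  · rw [if_pos h]
    have h0 : (0:ℤ) ≤ ⌊x⌋ := Int.floor_nonneg.mpr h
    have h1 : (0:ℝ) ≤ x - ⌊x⌋ := sub_nonneg.mpr (Int.floor_le x)
    rw [abs_of_nonneg (by exact_mod_cast h0), abs_of_nonneg h1, abs_of_nonneg h]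
    ring
  · rw [if_neg (not_le.mpr h)]
    have h0 : (0:ℤ) ≤ ⌊-x⌋ := Int.floor_nonneg.mpr (by linarith)
    have h1 : x - (-⌊-x⌋ : ℤ) ≤ 0 := by
      push_cast
      have := Int.floor_le (-x)
      linarith
    rw [abs_of_nonpos h1, abs_of_neg h]
    push_cast
    have h2 : (0:ℝ) ≤ ⌊-x⌋ := by exact_mod_cast h0
    rw [abs_neg, abs_of_nonneg h2]
    have := Int.floor_le (-x)
    linarith

lemma qz_err_lt (x : ℝ) : |x - (qz x : ℝ)| < 1 := by
  unfold qz
  rcases le_or_gt 0 x with h | h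
  · rw [if_pos h, abs_of_nonneg (sub_nonneg.mpr (Int.floor_le x))]
    have := Int.lt_floor_add_one x
    linarith
  · rw [if_neg (not_le.mpr h)]
    have h1 := Int.floor_le (-x)
    have h2 := Int.lt_floor_add_one (-x)
    rw [abs_of_nonpos (by push_cast; linarith)]
    push_cast
    linarith

/-- greedy quantization of a path, step size `t` -/
def greedy (t : ℝ) (w : ℕ → ℝ) : ℕ → ℤ
  | 0 => ⌊w 0 / t⌋
  | s+1 => greedy t w s + qz ((w (s+1) - t * greedy t w s)/t)

lemma greedy_err (t : ℝ) (ht : 0 < t) (w : ℕ → ℝ) (s : ℕ) :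
    |w s - t * greedy t w s| ≤ t := by
  cases s with
  | zero =>
    show |w 0 - t * (⌊w 0 / t⌋:ℤ)| ≤ t
    have h1 := Int.floor_le (w 0 / t)
    have h2 := Int.lt_floor_add_one (w 0 / t)
    have e : t * (w 0 / t) = w 0 := by field_simp
    have h1' := mul_le_mul_of_nonneg_left h1 ht.le
    have h2' := mul_lt_mul_of_pos_left h2 ht
    rw [abs_of_nonneg] <;> nlinarith
  | succ s =>
    show |w (s+1) - t * (greedy t w s + qz ((w (s+1) - t * greedy t w s)/t) : ℤ)| ≤ t
    set y := w (s+1) - t * greedy t w s with hy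
    have hkey := qz_err_lt (y / t)
    have h3 : w (s+1) - t * ((greedy t w s : ℝ) + (qz (y/t) : ℝ)) = t * (y/t - qz (y/t)) := by
      field_simp
      ring
    push_cast
    rw [h3, abs_mul, abs_of_pos ht]
    nlinarith [abs_nonneg (y/t - (qz (y/t):ℝ))]

lemma greedy_step (t : ℝ) (ht : 0 < t) (w : ℕ → ℝ) (s : ℕ) :
    t * |(greedy t w (s+1) - greedy t w s : ℤ)| + |w (s+1) - t * greedy t w (s+1)| ≤
      |w (s+1) - w s| + |w s - t * greedy t w s| := by
  set y := w (s+1) - t * greedy t w s with hy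
  have hd : (greedy t w (s+1) - greedy t w s : ℤ) = qz (y/t) := by
    show (greedy t w s + qz ((w (s+1) - t * greedy t w s)/t) - greedy t w s : ℤ) = _
    rw [add_sub_cancel_left]
  have h3 : w (s+1) - t * (greedy t w (s+1) : ℝ) = t * (y/t - qz (y/t)) := by
    show w (s+1) - t * ((greedy t w s + qz ((w (s+1) - t * greedy t w s)/t) : ℤ) : ℝ) = _
    push_cast
    field_simp
    ring
  have h4 : |y| = t * |y/t| := by
    rw [abs_div, abs_of_pos ht]
    field_simp
  have h5 : t * |(qz (y/t) : ℝ)| + t * |y/t - (qz (y/t) : ℝ)| = t * |y/t| := by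
    rw [← mul_add, abs_qz_add]
  have h6 : |y| ≤ |w (s+1) - w s| + |w s - t * greedy t w s| := by
    have : y = (w (s+1) - w s) + (w s - t * greedy t w s) := by rw [hy]; ring
    rw [this]
    exact abs_add_le _ _
  rw [hd, h3, abs_mul, abs_of_pos ht]
  push_cast
  linarith [h4 ▸ h6, h5]

lemma greedy_sum (t : ℝ) (ht : 0 < t) (w : ℕ → ℝ) (m : ℕ) :
    t * ∑ s ∈ Finset.range m, |((greedy t w (s+1) - greedy t w s : ℤ) : ℝ)| ≤
      (∑ s ∈ Finset.range m, |w (s+1) - w s|) + t := by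
  have key : ∀ m, t * (∑ s ∈ Finset.range m, |((greedy t w (s+1) - greedy t w s : ℤ) : ℝ)|)
      + |w m - t * greedy t w m| ≤
      (∑ s ∈ Finset.range m, |w (s+1) - w s|) + |w 0 - t * greedy t w 0| := by
    intro m
    induction m with
    | zero => simp
    | succ m ih =>
      rw [Finset.sum_range_succ, Finset.sum_range_succ, mul_add]
      have := greedy_step t ht w m
      push_cast at this ih ⊢
      linarith
  have h0 := greedy_err t ht w 0
  have h1 := abs_nonneg (w m - t * greedy t w m)
  have := key m
  linarith


/-- decoder of a list of signed unit moves into an integer vector -/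
def dec (m S : ℕ) (e : Fin S → Option (Fin m × Bool)) (i : Fin m) : ℤ :=
  ∑ s : Fin S, (Option.elim (e s) 0 fun p => if p.1 = i then (if p.2 then 1 else -1) else 0)

lemma dec_surj (m : ℕ) : ∀ (S : ℕ) (d : Fin m → ℤ), (∑ i, |d i|) ≤ (S : ℤ) →
    ∃ e : Fin S → Option (Fin m × Bool), dec m S e = d := by
  intro S
  induction S with
  | zero =>
    intro d hd
    have hz : ∀ i, d i = 0 := by
      intro i
      have h1 : |d i| ≤ ∑ j, |d j| :=
        Finset.single_le_sum (fun j _ => abs_nonneg (d j)) (Finset.mem_univ i)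
      have h2 := abs_nonneg (d i)
      have : |d i| = 0 := by omega
      exact abs_eq_zero.mp this
    refine ⟨Fin.elim0, ?_⟩
    funext i
    simp [dec, hz i]
  | succ S ih =>
    intro d hd
    by_cases hd0 : d = 0
    · refine ⟨fun _ => none, ?_⟩
      funext i
      simp [dec, hd0]
    · obtain ⟨i₀, hi₀⟩ := Function.ne_iff.mp hd0
      simp only [Pi.zero_apply] at hi₀
      set sgn : ℤ := if 0 < d i₀ then 1 else -1 with hsgn
      set d' : Fin m → ℤ := Function.update d i₀ (d i₀ - sgn) with hd'
      have habs : |d i₀ - sgn| = |d i₀| - 1 := by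
        rcases lt_trichotomy (d i₀) 0 with h | h | h
        · rw [hsgn, if_neg (by omega), abs_of_nonpos (by omega), abs_of_neg h]; ring
        · exact absurd h hi₀
        · rw [hsgn, if_pos h, abs_of_nonneg (by omega), abs_of_pos h]
      have hsum : (∑ i, |d' i|) = (∑ i, |d i|) - 1 := by
        have h1 : (fun i => |d' i|) = Function.update (fun i => |d i|) i₀ (|d i₀| - 1) := by
          funext i
          by_cases h : i = i₀
          · subst h; simp [hd', habs]
          · simp [hd', Function.update_of_ne h]
        rw [h1, Finset.sum_update_of_mem (Finset.mem_univ i₀)]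
        rw [← Finset.add_sum_erase _ _ (Finset.mem_univ i₀), Finset.sdiff_singleton_eq_erase]
        ring
      obtain ⟨e', he'⟩ := ih d' (by rw [hsum]; push_cast; omega)
      refine ⟨Fin.snoc e' (some (i₀, decide (0 < d i₀))), ?_⟩
      funext i
      have : dec m (S+1) (Fin.snoc e' (some (i₀, decide (0 < d i₀)))) i =
          dec m S e' i + (if i₀ = i then (if 0 < d i₀ then 1 else -1) else 0) := by
        unfold dec
        rw [Fin.sum_univ_castSucc]
        simp [Fin.snoc_castSucc, Fin.snoc_last]
      rw [this, he']
      by_cases h : i = i₀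
      · subst h
        simp [hd', hsgn]
      · rw [if_neg (Ne.symm h)]
        simp [hd', Function.update_of_ne h]

namespace WFrame



def snakeJ (N i j : ℕ) : ℕ := if i % 2 = 0 then j else N - 1 - j

def snake (N : ℕ) [NeZero N] (s : ℕ) : ZMod N × ZMod N :=
  (((s / N : ℕ) : ZMod N), ((snakeJ N (s / N) (s % N) : ℕ) : ZMod N))

lemma snake_div (N i j : ℕ) (hN : 0 < N) (hj : j < N) : (i * N + j) / N = i := by
  rw [add_comm, Nat.add_mul_div_right _ _ hN, Nat.div_eq_of_lt hj, Nat.zero_add]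

lemma snake_mod (N i j : ℕ) (hj : j < N) : (i * N + j) % N = j := by
  rw [add_comm, Nat.add_mul_mod_self_right, Nat.mod_eq_of_lt hj]

def Gfun (N : ℕ) [NeZero N] (u : ZMod N × ZMod N → ℝ) (s : ℕ) : ℝ :=
  if s % N = N - 1 ∧ s / N = N - 1 then 0
  else |u (snake N (s+1)) - u (snake N s)|

lemma Gfun_nonneg (N : ℕ) [NeZero N] (u : ZMod N × ZMod N → ℝ) (s : ℕ) :
    0 ≤ Gfun N u s := by
  unfold Gfun; split
  · exact le_rfl
  · exact abs_nonneg _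

/-- row part: for `i < N`, the sum of `Gfun` over `j < N-1` inside row `i`
equals the (i-th row of the) second part of `tv`. -/
lemma row_eq (N : ℕ) [NeZero N] (hN : 2 ≤ N) (u : ZMod N × ZMod N → ℝ) (i : ℕ) (hi : i < N) :
    ∑ j ∈ Finset.range (N-1), Gfun N u (i*N+j) =
      ∑ j ∈ Finset.range (N-1),
        |u ((i : ZMod N), ((j+1 : ℕ) : ZMod N)) - u ((i : ZMod N), ((j : ℕ) : ZMod N))| := by
  have hN0 : 0 < N := by omega
  have hterm : ∀ j ∈ Finset.range (N-1), Gfun N u (i*N+j) =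
      |u ((i : ZMod N), ((snakeJ N i (j+1) : ℕ) : ZMod N)) -
        u ((i : ZMod N), ((snakeJ N i j : ℕ) : ZMod N))| := by
    intro j hj
    rw [Finset.mem_range] at hj
    have hjN : j < N := by omega
    have hj1N : j + 1 < N := by omega
    unfold Gfun
    rw [if_neg (by rw [snake_mod N i j hjN]; omega)]
    have e1 : i*N+j+1 = i*N+(j+1) := by omega
    unfold snake
    rw [e1, snake_div N i (j+1) hN0 hj1N, snake_mod N i (j+1) hj1N,
      snake_div N i j hN0 hjN, snake_mod N i j hjN]
  rw [Finset.sum_congr rfl hterm]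
  rcases Nat.even_or_odd i with hpar | hpar
  · apply Finset.sum_congr rfl
    intro j hj
    have : i % 2 = 0 := Nat.even_iff.mp hpar
    unfold snakeJ
    rw [if_pos this, if_pos this]
  · have hodd : i % 2 = 1 := Nat.odd_iff.mp hpar
    have hodd' : ¬ (i % 2 = 0) := by omega
    rw [← Finset.sum_range_reflect (fun j =>
      |u ((i : ZMod N), ((j+1 : ℕ) : ZMod N)) - u ((i : ZMod N), ((j : ℕ) : ZMod N))| ) (N-1)]
    apply Finset.sum_congr rfl
    intro j hj
    rw [Finset.mem_range] at hj
    unfold snakeJ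
    rw [if_neg hodd', if_neg hodd']
    have e1 : N - 1 - (j+1) = N - 1 - 1 - j := by omega
    have e2 : N - 1 - j = (N - 1 - 1 - j) + 1 := by omega
    rw [e1, e2, abs_sub_comm]

lemma snakeJ_cross (N i : ℕ) (hN : 2 ≤ N) : snakeJ N (i+1) 0 = snakeJ N i (N-1) := by
  unfold snakeJ
  rcases Nat.even_or_odd i with h | h
  · have h0 : i % 2 = 0 := Nat.even_iff.mp h
    have h1 : (i+1) % 2 = 1 := by omega
    simp [h0, h1]
  · have h0 : i % 2 = 1 := Nat.odd_iff.mp h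
    have h1 : (i+1) % 2 = 0 := by omega
    simp [h0, h1]

/-- cross part: the `j = N-1` term of `Gfun` in row `i < N-1`. -/
lemma cross_eq (N : ℕ) [NeZero N] (hN : 2 ≤ N) (u : ZMod N × ZMod N → ℝ) (i : ℕ)
    (hi : i < N - 1) :
    Gfun N u (i*N+(N-1)) =
      |u (((i+1 : ℕ) : ZMod N), ((snakeJ N i (N-1) : ℕ) : ZMod N)) -
        u ((i : ZMod N), ((snakeJ N i (N-1) : ℕ) : ZMod N))| := by
  have hN0 : 0 < N := by omega
  have hN1 : N - 1 < N := by omega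
  unfold Gfun
  rw [if_neg (by rw [snake_div N i (N-1) hN0 hN1]; omega)]
  have e1 : i*N+(N-1)+1 = (i+1)*N + 0 := by
    have : i*N + N = (i+1)*N := by ring
    omega
  unfold snake
  rw [e1, snake_div N (i+1) 0 hN0 hN0, snake_mod N (i+1) 0 hN0,
    snake_div N i (N-1) hN0 hN1, snake_mod N i (N-1) hN1, snakeJ_cross N i hN]

lemma snakeTV_le_tv (N : ℕ) (hN : 2 ≤ N) [NeZero N] (u : ZMod N × ZMod N → ℝ) :
    ∑ s ∈ Finset.range (N*N-1), |u (snake N (s+1)) - u (snake N s)| ≤ tv N u := by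
  have hN0 : 0 < N := by omega
  have hNN : N ≤ N * N := Nat.le_mul_of_pos_left N hN0
  -- replace by Gfun
  have step1 : ∑ s ∈ Finset.range (N*N-1), |u (snake N (s+1)) - u (snake N s)| =
      ∑ s ∈ Finset.range (N*N-1), Gfun N u s := by
    apply Finset.sum_congr rfl
    intro s hs
    rw [Finset.mem_range] at hs
    unfold Gfun
    rw [if_neg]
    rintro ⟨h1, h2⟩
    have h3 := Nat.div_add_mod s N
    rw [h1, h2] at h3
    have h4 : N * (N-1) = N*N - N := by
      rw [Nat.mul_sub_one, Nat.mul_comm]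
    omega
  rw [step1]
  have step2 : ∑ s ∈ Finset.range (N*N-1), Gfun N u s ≤
      ∑ s ∈ Finset.range (N*N), Gfun N u s := by
    apply Finset.sum_le_sum_of_subset_of_nonneg
    · exact Finset.range_subset_range.mpr (Nat.sub_le _ _)
    · intro s _ _; exact Gfun_nonneg N u s
  refine le_trans step2 ?_
  have step3 : ∑ s ∈ Finset.range (N*N), Gfun N u s =
      ∑ p ∈ Finset.range N ×ˢ Finset.range N, Gfun N u (p.1 * N + p.2) := by
    apply Finset.sum_nbij' (i := fun s => (s / N, s % N)) (j := fun p => p.1 * N + p.2)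
    · intro s hs
      rw [Finset.mem_range] at hs
      rw [Finset.mem_product, Finset.mem_range, Finset.mem_range]
      constructor
      · exact Nat.div_lt_iff_lt_mul hN0 |>.mpr hs
      · exact Nat.mod_lt s hN0
    · intro p hp
      rw [Finset.mem_product, Finset.mem_range, Finset.mem_range] at hp
      rw [Finset.mem_range]
      calc p.1 * N + p.2 < p.1 * N + N := by omega
      _ = (p.1 + 1) * N := by ring
      _ ≤ N * N := Nat.mul_le_mul_right N (by omega)
    · intro s hs
      exact Nat.div_add_mod' s N
    · intro p hp
      rw [Finset.mem_product, Finset.mem_range, Finset.mem_range] at hp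
      ext
      · exact snake_div N p.1 p.2 hN0 hp.2
      · exact snake_mod N p.1 p.2 hp.2
    · intro s hs
      rw [Nat.div_add_mod' s N]
  rw [step3, Finset.sum_product]
  have hsum : ∀ (f : ℕ → ℝ), ∑ j ∈ Finset.range N, f j
      = (∑ j ∈ Finset.range (N-1), f j) + f (N-1) := by
    intro f
    conv_lhs => rw [show N = (N-1)+1 by omega]
    rw [Finset.sum_range_succ]
  have split1 : ∑ i ∈ Finset.range N, ∑ j ∈ Finset.range N, Gfun N u (i*N+j) =
      (∑ i ∈ Finset.range N, ∑ j ∈ Finset.range (N-1), Gfun N u (i*N+j)) +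
      ∑ i ∈ Finset.range N, Gfun N u (i*N+(N-1)) := by
    rw [← Finset.sum_add_distrib]
    exact Finset.sum_congr rfl fun i _ => hsum _
  rw [split1]
  have hrow : (∑ i ∈ Finset.range N, ∑ j ∈ Finset.range (N-1), Gfun N u (i*N+j)) =
      ∑ i ∈ Finset.range N, ∑ j ∈ Finset.range (N - 1),
        |u ((i : ZMod N), (j : ZMod N) + 1) - u ((i : ZMod N), (j : ZMod N))| := by
    apply Finset.sum_congr rfl
    intro i hi
    rw [Finset.mem_range] at hi
    rw [row_eq N hN u i hi]
    apply Finset.sum_congr rfl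
    intro j hj
    norm_num [Nat.cast_add]
  have hcross : (∑ i ∈ Finset.range N, Gfun N u (i*N+(N-1))) ≤
      ∑ i ∈ Finset.range (N - 1), ∑ j ∈ Finset.range N,
        |u ((i : ZMod N) + 1, (j : ZMod N)) - u ((i : ZMod N), (j : ZMod N))| := by
    rw [hsum]
    have hlast : Gfun N u ((N-1)*N+(N-1)) = 0 := by
      unfold Gfun
      rw [if_pos ⟨snake_mod N (N-1) (N-1) (by omega), snake_div N (N-1) (N-1) hN0 (by omega)⟩]
    rw [hlast, add_zero]
    apply Finset.sum_le_sum
    intro i hi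
    rw [Finset.mem_range] at hi
    rw [cross_eq N hN u i hi]
    have hmem : snakeJ N i (N-1) ∈ Finset.range N := by
      rw [Finset.mem_range]
      unfold snakeJ
      split <;> omega
    have := Finset.single_le_sum
      (f := fun j : ℕ => |u ((i : ZMod N) + 1, ((j : ℕ) : ZMod N)) - u ((i : ZMod N), ((j : ℕ) : ZMod N))|)
      (fun j _ => abs_nonneg _) hmem
    refine le_trans (le_of_eq ?_) this
    norm_num [Nat.cast_add]
  unfold tv
  linarith


def snakeInv (N : ℕ) [NeZero N] (k : ZMod N × ZMod N) : ℕ :=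
  k.1.val * N + snakeJ N k.1.val k.2.val

lemma snakeJ_lt (N i j : ℕ) (hN : 0 < N) (hj : j < N) : snakeJ N i j < N := by
  unfold snakeJ; split <;> omega

lemma snakeJ_invol (N i j : ℕ) (hj : j < N) : snakeJ N i (snakeJ N i j) = j := by
  unfold snakeJ; split <;> omega

lemma snakeInv_le (N : ℕ) [NeZero N] (k : ZMod N × ZMod N) : snakeInv N k ≤ N * N - 1 := by
  have hN : 0 < N := Nat.pos_of_ne_zero (NeZero.ne N)
  have h1 : k.1.val < N := ZMod.val_lt k.1
  have h2 : snakeJ N k.1.val k.2.val < N := snakeJ_lt N _ _ hN (ZMod.val_lt k.2)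
  unfold snakeInv
  have : k.1.val * N + snakeJ N k.1.val k.2.val < N * N := by
    calc k.1.val * N + snakeJ N k.1.val k.2.val < k.1.val * N + N := by omega
    _ = (k.1.val + 1) * N := by ring
    _ ≤ N * N := Nat.mul_le_mul_right N (by omega)
  omega

lemma snake_snakeInv (N : ℕ) [NeZero N] (k : ZMod N × ZMod N) : snake N (snakeInv N k) = k := by
  have hN : 0 < N := Nat.pos_of_ne_zero (NeZero.ne N)
  have h2 : snakeJ N k.1.val k.2.val < N := snakeJ_lt N _ _ hN (ZMod.val_lt k.2)
  unfold snake snakeInv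
  have hd := snake_div N k.1.val _ hN h2
  have hm := snake_mod N k.1.val _ h2
  rw [hd, hm, snakeJ_invol N _ _ (ZMod.val_lt k.2)]
  ext <;> simp [ZMod.natCast_val, ZMod.cast_id]


lemma clamp_err (M x y : ℝ) (hy0 : 0 ≤ y) (hyM : y ≤ M) :
    |y - max 0 (min M x)| ≤ |y - x| := by
  have hM0 : (0:ℝ) ≤ M := le_trans hy0 hyM
  rcases le_total x 0 with h | h
  · rw [min_eq_right (le_trans h hM0), max_eq_left h, sub_zero,
      abs_of_nonneg hy0, abs_of_nonneg (by linarith)]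
    linarith
  · rcases le_total M x with h2 | h2
    · rw [min_eq_left h2, max_eq_right hM0, abs_of_nonpos (by linarith),
        abs_of_nonpos (by linarith)]
      linarith
    · rw [min_eq_right h2, max_eq_right h]

lemma cover_le (N : ℕ) (hN : 2 ≤ N) [NeZero N] (M t V : ℝ) (hM : 0 ≤ M) (ht : 0 < t)
    (hV : 0 ≤ V) (S : Set ((ZMod N × ZMod N) → ℝ))
    (hS : ∀ u ∈ S, (∀ k, u k ∈ Set.Icc (0:ℝ) M) ∧
      (∑ s ∈ Finset.range (N*N-1), |u (snake N (s+1)) - u (snake N s)| ≤ V)) :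
    coverNum M t S ≤ (⌊M/t⌋.toNat + 1) * (2*(N*N-1)+1)^(⌊V/t⌋.toNat + 1) := by
  set m : ℕ := N*N-1 with hm
  set Sn : ℕ := ⌊V/t⌋.toNat + 1 with hSn
  set R : ℕ := ⌊M/t⌋.toNat with hR
  have hcard : Fintype.card (Fin (R+1) × (Fin Sn → Option (Fin m × Bool)))
      = (R+1) * (2*m+1)^Sn := by
    simp [Fintype.card_fun]
    ring_nf
  set dext : (Fin Sn → Option (Fin m × Bool)) → ℕ → ℤ :=
    fun e j => if h : j < m then dec m Sn e ⟨j, h⟩ else 0 with hdext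
  set center : Fin (R+1) × (Fin Sn → Option (Fin m × Bool)) → (ZMod N × ZMod N) → ℝ :=
    fun code k => max 0 (min M (t * (((code.1.val : ℤ) : ℝ) +
      ((∑ j ∈ Finset.range (snakeInv N k), dext code.2 j : ℤ) : ℝ)))) with hcenter
  apply Nat.sInf_le
  refine ⟨fun j k => center ((Fintype.equivFinOfCardEq hcard).symm j) k, ?_, ?_⟩
  · intro j x
    constructor
    · exact le_max_left _ _
    · exact max_le hM (min_le_left _ _)
  · intro u hu
    obtain ⟨hub, hutv⟩ := hS u hu
    set w : ℕ → ℝ := fun s => u (snake N s) with hw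
    set c : ℕ → ℤ := greedy t w with hc
    have herr : ∀ s, |w s - t * c s| ≤ t := greedy_err t ht w
    -- ℓ¹ bound on increments
    have hZ : (∑ i : Fin m, |c (i.val+1) - c i.val|) ≤ (Sn : ℤ) := by
      have h1 : ((∑ i : Fin m, |c (i.val+1) - c i.val| : ℤ) : ℝ) ≤ V/t + 1 := by
        push_cast
        rw [Fin.sum_univ_eq_sum_range (fun j => |(c (j+1) : ℝ) - (c j : ℝ)|) m]
        have h2 := greedy_sum t ht w m
        push_cast at h2
        have h3 : (∑ s ∈ Finset.range m, |w (s+1) - w s|) + t ≤ V + t := by linarith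
        have h4 : t * (∑ s ∈ Finset.range m, |(c (s+1) : ℝ) - (c s : ℝ)|) ≤ V + t :=
          le_trans h2 h3
        rw [mul_comm] at h4
        have h5 := (le_div_iff₀ ht).mpr h4
        have h6 : (V+t)/t = V/t + 1 := by field_simp
        linarith
      have h5 : (∑ i : Fin m, |c (i.val+1) - c i.val| : ℤ) ≤ ⌊V/t + 1⌋ := Int.le_floor.mpr h1
      have h6 : ⌊V/t + (1:ℝ)⌋ = ⌊V/t⌋ + 1 := by
        exact_mod_cast Int.floor_add_intCast (V/t) 1
      have h7 : (0:ℤ) ≤ ⌊V/t⌋ := Int.floor_nonneg.mpr (div_nonneg hV ht.le)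
      have h8 : ((Sn:ℕ):ℤ) = ⌊V/t⌋ + 1 := by
        rw [hSn]
        push_cast [Int.toNat_of_nonneg h7]
        ring
      omega
    obtain ⟨e, he⟩ := dec_surj m Sn (fun i => c (i.val+1) - c i.val) hZ
    have hw00 : 0 ≤ w 0 := (hub _).1
    have hw0M : w 0 ≤ M := (hub _).2
    have hc00 : (0:ℤ) ≤ c 0 := Int.floor_nonneg.mpr (div_nonneg hw00 ht.le)
    have hc0R : c 0 ≤ (R:ℤ) := by
      have h9 : c 0 ≤ ⌊M/t⌋ := Int.floor_le_floor (by
        apply div_le_div_of_nonneg_right hw0M ht.le -- name check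
        )
      have h10 : (0:ℤ) ≤ ⌊M/t⌋ := le_trans hc00 h9
      rw [hR]
      rw [Int.toNat_of_nonneg h10]
      exact h9
    refine ⟨(Fintype.equivFinOfCardEq hcard) (⟨(c 0).toNat, by
        have := Int.toNat_le_toNat hc0R
        simp at this
        omega⟩, e), ?_⟩
    intro k
    simp only [Equiv.symm_apply_apply]
    set s₀ : ℕ := snakeInv N k with hs0
    have hs₀m : s₀ ≤ m := snakeInv_le N k
    have hteles : (∑ j ∈ Finset.range s₀, dext e j) = c s₀ - c 0 := by
      have hstep : ∀ j ∈ Finset.range s₀, dext e j = c (j+1) - c j := by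
        intro j hj
        rw [Finset.mem_range] at hj
        have hjm : j < m := lt_of_lt_of_le hj hs₀m
        rw [hdext]
        simp only [dif_pos hjm]
        rw [he]
      rw [Finset.sum_congr rfl hstep, Finset.sum_range_sub (fun j => c j)]
    have hval : center (⟨(c 0).toNat, by
        have := Int.toNat_le_toNat hc0R
        simp at this
        omega⟩, e) k = max 0 (min M (t * (c s₀ : ℝ))) := by
      rw [hcenter]
      simp only []
      rw [hteles]
      push_cast [Int.toNat_of_nonneg hc00]
      ring_nf
    rw [hval]
    have hkey : u k = w s₀ := by
      rw [hw]
      simp only []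
      rw [hs0, snake_snakeInv]
    rw [hkey]
    exact le_trans (clamp_err M _ _ (by rw [← hkey]; exact (hub k).1)
      (by rw [← hkey]; exact (hub k).2)) (herr s₀)

end WFrame

namespace WFrame

set_option maxHeartbeats 1000000 in
/-- covering number estimate for
S₀ = {u ∈ [0,M]^Ω : ‖λ·Wu‖₁ ≤ ‖λ·Wf‖₁}:  for a ≥ 1 and t ≥ |Ω|^{−a},
ln N(S₀,t) ≤ (C_a/t)·|Ω|^{b/2}·log₂|Ω| with b = max{1−β,1} and
C_a = 20·M·(4a+b)·C_W·C_f·(1+C_W·C_f). -/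
theorem stmt2 (N : ℕ) (hN : 2 ≤ N) [NeZero N] (r : ℕ) (hr : 1 ≤ r) (L : ℕ) (hL : 1 ≤ L)
    (M : ℝ) (hM : 1 ≤ M)
    (CW : ℝ) (hCW1 : 1 ≤ CW)
    (hCW : ∀ u : ZMod N × ZMod N → ℝ, tv N u ≤ CW * wnorm1 r N L u)
    (β : ℝ) (hβ : -1 ≤ β) (hβ' : β ≤ 1)
    (Υ : ℕ → ℕ × ℕ → ZMod N × ZMod N → ℕ)
    (hΥ1 : ∀ l α k, 1 ≤ Υ l α k)
    (hΥ2 : ∀ l α k, (Υ l α k : ℝ) ≤ Real.logb 2 N)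
    (lam : ℕ → ℕ × ℕ → ZMod N × ZMod N → ℝ)
    (hlam : ∀ l α k, lam l α k = (2 : ℝ) ^ (β * (Υ l α k : ℝ)))
    (Cf : ℝ) (hCf : 1 ≤ Cf)
    (f : ZMod N × ZMod N → ℝ) (hfM : ∀ k, f k ∈ Set.Icc (0 : ℝ) M)
    (hf : wnormW r N L lam f ≤ Cf * Real.sqrt ((N : ℝ) ^ 2))
    (a : ℝ) (ha : 1 ≤ a)
    (t : ℝ) (ht : ((N : ℝ) ^ 2) ^ (-a) ≤ t) :
    Real.log (coverNum M t
        {u : ZMod N × ZMod N → ℝ | (∀ k, u k ∈ Set.Icc (0 : ℝ) M) ∧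
          wnormW r N L lam u ≤ wnormW r N L lam f}) ≤
      20 * M * (4 * a + max (1 - β) 1) * CW * Cf * (1 + CW * Cf) / t *
        ((N : ℝ) ^ 2) ^ (max (1 - β) 1 / 2) * Real.logb 2 ((N : ℝ) ^ 2) := by
  have hN0 : (0:ℝ) < N := by exact_mod_cast (by omega : 0 < N)
  have hNR : (2:ℝ) ≤ (N:ℝ) := by exact_mod_cast hN
  have ht0 : 0 < t := lt_of_lt_of_le (Real.rpow_pos_of_pos (by positivity) (-a)) ht
  set b : ℝ := max (1 - β) 1 with hbdef
  have hb1 : 1 ≤ b := by rw [hbdef]; exact le_max_right _ _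
  set X : ℝ := (N:ℝ) ^ b with hXdef
  have hX2 : (2:ℝ) ≤ X := by
    calc (2:ℝ) ≤ (N:ℝ) := hNR
    _ = (N:ℝ) ^ (1:ℝ) := (Real.rpow_one _).symm
    _ ≤ X := Real.rpow_le_rpow_of_exponent_le (by linarith) hb1
  set L2 : ℝ := Real.logb 2 N with hL2def
  have hL21 : 1 ≤ L2 := by
    rw [hL2def]
    calc (1:ℝ) = Real.logb 2 2 := (Real.logb_self_eq_one (by norm_num : (1:ℝ) < 2)).symm
    _ ≤ Real.logb 2 N := Real.logb_le_logb_of_le (by norm_num) (by norm_num) hNR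
  have hP : ((N:ℝ)^2) ^ (b/2) = X := by
    rw [hXdef, ← Real.rpow_natCast (N:ℝ) 2, ← Real.rpow_mul (le_of_lt hN0)]
    norm_num
    congr 1
    ring
  have hQ : Real.logb 2 ((N:ℝ)^2) = 2 * L2 := by
    rw [hL2def, Real.logb, Real.logb, Real.log_pow]
    push_cast
    ring
  have hb1' : 1 - b = min β 0 := by
    rw [hbdef]
    rcases le_total β 0 with h | h
    · rw [min_eq_left h, max_eq_left (by linarith)]
      ring
    · rw [min_eq_right h, max_eq_right (by linarith)]
      ring
  have hlamlb : ∀ l α k, (N:ℝ) ^ ((1:ℝ)-b) ≤ lam l α k := by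
    intro l α k
    rw [hlam]
    rcases le_total 0 β with h | h
    · rw [hb1', min_eq_right h, Real.rpow_zero]
      have h0 : (0:ℝ) ≤ β * (Υ l α k : ℝ) := mul_nonneg h (by positivity)
      calc (1:ℝ) = (2:ℝ)^(0:ℝ) := (Real.rpow_zero 2).symm
      _ ≤ 2 ^ (β * (Υ l α k : ℝ)) := Real.rpow_le_rpow_of_exponent_le one_le_two h0
    · rw [hb1', min_eq_left h]
      have h1 : β * Real.logb 2 N ≤ β * (Υ l α k : ℝ) :=
        mul_le_mul_of_nonpos_left (hΥ2 l α k) h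
      calc (N:ℝ) ^ β = (2:ℝ) ^ (Real.logb 2 N * β) := by
            rw [Real.rpow_mul (by norm_num), Real.rpow_logb (by norm_num) (by norm_num) hN0]
      _ ≤ 2 ^ (β * (Υ l α k : ℝ)) := by
            rw [mul_comm]
            exact Real.rpow_le_rpow_of_exponent_le one_le_two h1
  -- total variation bound for members of the class
  have hVbound : ∀ u : ZMod N × ZMod N → ℝ,
      wnormW r N L lam u ≤ wnormW r N L lam f → tv N u ≤ CW * Cf * X := by
    intro u huW
    have h1 : (N:ℝ)^((1:ℝ)-b) * wnorm1 r N L u ≤ wnormW r N L lam u := by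
      unfold wnorm1 wnormW
      rw [Finset.mul_sum]
      refine Finset.sum_le_sum fun k _ => ?_
      rw [Finset.mul_sum]
      refine Finset.sum_le_sum fun l _ => ?_
      rw [Finset.mul_sum]
      refine Finset.sum_le_sum fun α _ => ?_
      exact mul_le_mul_of_nonneg_right (hlamlb l α k) (abs_nonneg _)
    have h2 : wnormW r N L lam u ≤ Cf * (N:ℝ) := by
      refine le_trans huW (le_trans hf ?_)
      rw [Real.sqrt_sq hN0.le]
    have hprod : (N:ℝ)^(b-1) * (N:ℝ)^((1:ℝ)-b) = 1 := by
      rw [← Real.rpow_add hN0]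
      norm_num
    have hpow : (N:ℝ)^(b-1) * (N:ℝ) = X := by
      nth_rewrite 2 [← Real.rpow_one (N:ℝ)]
      rw [hXdef, ← Real.rpow_add hN0]
      norm_num
    have hrp : (0:ℝ) ≤ (N:ℝ)^(b-1) := (Real.rpow_pos_of_pos hN0 _).le
    have h3 : wnorm1 r N L u ≤ (N:ℝ)^(b-1) * (Cf * (N:ℝ)) := by
      calc wnorm1 r N L u = (N:ℝ)^(b-1) * ((N:ℝ)^((1:ℝ)-b) * wnorm1 r N L u) := by
            rw [← mul_assoc, hprod, one_mul]
      _ ≤ (N:ℝ)^(b-1) * (Cf * (N:ℝ)) :=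
            mul_le_mul_of_nonneg_left (le_trans h1 h2) hrp
    calc tv N u ≤ CW * wnorm1 r N L u := hCW u
    _ ≤ CW * ((N:ℝ)^(b-1) * (Cf * (N:ℝ))) := by
          exact mul_le_mul_of_nonneg_left h3 (by linarith)
    _ = CW * Cf * ((N:ℝ)^(b-1) * (N:ℝ)) := by ring
    _ = CW * Cf * X := by rw [hpow]
  rw [hP, hQ]
  by_cases hMt : M ≤ 2*t
  · -- trivial covering by a single ball
    have hcov : coverNum M t {u : ZMod N × ZMod N → ℝ | (∀ k, u k ∈ Set.Icc (0:ℝ) M) ∧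
        wnormW r N L lam u ≤ wnormW r N L lam f} ≤ 1 := by
      apply Nat.sInf_le
      refine ⟨fun _ _ => M/2, fun j x => ⟨by linarith, by linarith⟩, ?_⟩
      intro u hu
      refine ⟨0, fun x => ?_⟩
      have h1 := (hu.1 x).1
      have h2 := (hu.1 x).2
      rw [abs_le]
      constructor <;> linarith
    have hlog0 : Real.log (coverNum M t {u : ZMod N × ZMod N → ℝ |
        (∀ k, u k ∈ Set.Icc (0:ℝ) M) ∧ wnormW r N L lam u ≤ wnormW r N L lam f}) ≤ 0 := by
      rcases Nat.le_one_iff_eq_zero_or_eq_one.mp hcov with h | h <;> rw [h] <;> simp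
    refine le_trans hlog0 ?_
    have c1 : (0:ℝ) ≤ 20 * M * (4*a+b) * CW * Cf * (1+CW*Cf) := by
      have : (0:ℝ) ≤ CW*Cf := by nlinarith
      have : (0:ℝ) ≤ 4*a+b := by linarith
      positivity
    have c2 : (0:ℝ) ≤ X := by linarith
    have c3 : (0:ℝ) ≤ 2*L2 := by linarith
    have := mul_nonneg (mul_nonneg (div_nonneg c1 ht0.le) c2) c3
    linarith [this]
  · push_neg at hMt
    set V : ℝ := CW * Cf * X with hVdef
    have hV0 : (0:ℝ) ≤ V := by
      have h1 : (0:ℝ) ≤ CW*Cf := by nlinarith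
      rw [hVdef]
      nlinarith
    have hcov := cover_le N hN M t V (by linarith) ht0 hV0
      {u : ZMod N × ZMod N → ℝ | (∀ k, u k ∈ Set.Icc (0:ℝ) M) ∧
        wnormW r N L lam u ≤ wnormW r N L lam f}
      (fun u hu => ⟨hu.1, le_trans (snakeTV_le_tv N hN u) (hVbound u hu.2)⟩)
    set R : ℕ := ⌊M/t⌋.toNat with hRdef
    set Sn : ℕ := ⌊V/t⌋.toNat + 1 with hSndef
    set K : ℕ := (R+1) * (2*(N*N-1)+1)^Sn with hKdef
    have hK1 : 1 ≤ K := by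
      rw [hKdef]
      exact Nat.mul_pos (Nat.succ_pos _) (pow_pos (Nat.succ_pos _) Sn)
    have hlog1 : Real.log (coverNum M t {u : ZMod N × ZMod N → ℝ |
        (∀ k, u k ∈ Set.Icc (0:ℝ) M) ∧ wnormW r N L lam u ≤ wnormW r N L lam f}) ≤
        Real.log K := by
      rcases Nat.eq_zero_or_pos (coverNum M t {u : ZMod N × ZMod N → ℝ |
        (∀ k, u k ∈ Set.Icc (0:ℝ) M) ∧ wnormW r N L lam u ≤ wnormW r N L lam f}) with h | h
      · rw [h]
        simp only [Nat.cast_zero, Real.log_zero]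
        exact Real.log_nonneg (by exact_mod_cast hK1)
      · exact Real.log_le_log (by exact_mod_cast h) (by exact_mod_cast hcov)
    have hMt0 : (0:ℝ) ≤ M/t := by positivity
    have hVt0 : (0:ℝ) ≤ V/t := div_nonneg hV0 ht0.le
    have hlog2 : Real.log 2 ≤ 1 := by
      have := Real.log_le_sub_one_of_pos (by norm_num : (0:ℝ) < 2)
      linarith
    have hlog2' : (0:ℝ) ≤ Real.log 2 := Real.log_nonneg one_le_two
    have hlogK : Real.log K ≤ M/t + ((V/t) + 1) * (3 * Real.log 2 * L2) := by
      clear hlog1 hcov hK1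
      have e1 : ((K:ℕ):ℝ) = ((R:ℝ)+1) * (((2*(N*N-1)+1 : ℕ)):ℝ)^(Sn:ℕ) := by
        rw [hKdef]
        push_cast
        ring
      rw [e1, Real.log_mul (by positivity) (by positivity), Real.log_pow]
      have hR1 : Real.log ((R:ℝ)+1) ≤ M/t := by
        have hlog := Real.log_le_sub_one_of_pos (x := (R:ℝ)+1) (by positivity)
        have h0 : (0:ℤ) ≤ ⌊M/t⌋ := Int.floor_nonneg.mpr hMt0
        have hRle : (R:ℝ) ≤ M/t := by
          have h2 : ((R:ℕ):ℝ) = ((⌊M/t⌋:ℤ):ℝ) := by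
            rw [hRdef]
            exact_mod_cast congrArg (Int.cast : ℤ → ℝ) (Int.toNat_of_nonneg h0)
          rw [h2]
          exact Int.floor_le _
        linarith
      have hbase0 : (1:ℝ) ≤ ((2*(N*N-1)+1 : ℕ):ℝ) := by
        have h1 : (1:ℕ) ≤ 2*(N*N-1)+1 := Nat.succ_le_succ (Nat.zero_le _)
        exact_mod_cast h1
      have hbase : Real.log ((2*(N*N-1)+1 : ℕ):ℝ) ≤ 3 * Real.log 2 * L2 := by
        have hle : ((2*(N*N-1)+1 : ℕ):ℝ) ≤ (N:ℝ)^(3:ℕ) := by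
          have h1 : 2*(N*N) ≤ N*(N*N) := Nat.mul_le_mul_right _ hN
          have h2 : 1 ≤ N*N := Nat.one_le_iff_ne_zero.mpr (Nat.mul_ne_zero (NeZero.ne N) (NeZero.ne N))
          have h3 : 2*(N*N-1)+1 ≤ N^3 := by
            calc 2*(N*N-1)+1 ≤ 2*(N*N) := by omega
            _ ≤ N*(N*N) := h1
            _ = N^3 := by ring
          exact_mod_cast h3
        calc Real.log ((2*(N*N-1)+1 : ℕ):ℝ) ≤ Real.log ((N:ℝ)^(3:ℕ)) :=
              Real.log_le_log (by linarith) hle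
        _ = 3 * Real.log (N:ℝ) := by
              rw [Real.log_pow]
              push_cast
              ring
        _ = 3 * Real.log 2 * L2 := by
              rw [hL2def, Real.logb]
              field_simp
      have hSnle : ((Sn:ℕ):ℝ) ≤ V/t + 1 := by
        have h0 : (0:ℤ) ≤ ⌊V/t⌋ := Int.floor_nonneg.mpr hVt0
        have h2 : ((Sn:ℕ):ℝ) = ((⌊V/t⌋:ℤ):ℝ) + 1 := by
          rw [hSndef]
          push_cast
          rw [show ((⌊V/t⌋.toNat:ℕ):ℝ) = ((⌊V/t⌋:ℤ):ℝ) from by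
            exact_mod_cast congrArg (Int.cast : ℤ → ℝ) (Int.toNat_of_nonneg h0)]
        rw [h2]
        have := Int.floor_le (V/t)
        linarith
      have hmul := mul_le_mul hSnle hbase (Real.log_nonneg hbase0) (add_nonneg hVt0 zero_le_one)
      linarith
    have hfinal : M/t + ((V/t) + 1) * (3*Real.log 2*L2) ≤
        20 * M * (4*a+b) * CW * Cf * (1+CW*Cf) / t * X * (2*L2) := by
      clear hcov hlog1 hlogK hK1
      have g1 : (1:ℝ) ≤ CW*Cf :=
        le_trans hCW1 (le_mul_of_one_le_right (by linarith) hCf)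
      have g2 : (1:ℝ) ≤ CW*Cf*X :=
        le_trans g1 (le_mul_of_one_le_right (by linarith) (by linarith))
      have g3 : (1:ℝ) ≤ CW*Cf*X*L2 :=
        le_trans g2 (le_mul_of_one_le_right (by linarith) (by linarith))
      set U : ℝ := M * CW * Cf * X * L2 / t with hUdef
      have m0 : (0:ℝ) ≤ M := by linarith
      have hU0 : (0:ℝ) ≤ U := by
        rw [hUdef]
        apply div_nonneg _ ht0.le
        have h1 : (0:ℝ) ≤ M*(CW*Cf*X*L2) := mul_nonneg m0 (by linarith)
        calc (0:ℝ) ≤ M*(CW*Cf*X*L2) := h1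
        _ = M*CW*Cf*X*L2 := by ring
      have hA : M/t ≤ U := by
        rw [hUdef]
        apply div_le_div_of_nonneg_right ?_ ht0.le
        calc M = M*1 := (mul_one M).symm
        _ ≤ M*(CW*Cf*X*L2) := mul_le_mul_of_nonneg_left g3 m0
        _ = M*CW*Cf*X*L2 := by ring
      have hB : (V/t) * (3*Real.log 2 * L2) ≤ 3*U := by
        have eB : (V/t)*(3*Real.log 2*L2) = (V*(3*Real.log 2*L2))/t := by ring
        have eU : 3*U = (3*(M*CW*Cf*X*L2))/t := by rw [hUdef]; ring
        rw [eB, eU]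
        apply div_le_div_of_nonneg_right ?_ ht0.le
        rw [hVdef]
        calc (CW*Cf*X)*(3*Real.log 2*L2) = (3*Real.log 2)*(CW*Cf*X*L2) := by ring
        _ ≤ (3*M)*(CW*Cf*X*L2) := by
            apply mul_le_mul_of_nonneg_right _ (by linarith : (0:ℝ) ≤ CW*Cf*X*L2)
            linarith
        _ = 3*(M*CW*Cf*X*L2) := by ring
      have hC : 3*Real.log 2 * L2 ≤ 2*U := by
        have hMt2 : (2:ℝ) ≤ M/t := by
          rw [le_div_iff₀ ht0]
          linarith
        have hq1 : L2 ≤ CW*Cf*X*L2 := by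
          calc L2 = 1*L2 := (one_mul L2).symm
          _ ≤ (CW*Cf*X)*L2 := mul_le_mul_of_nonneg_right g2 (by linarith)
          _ = CW*Cf*X*L2 := by ring
        have hq2 := mul_le_mul hMt2 hq1 (by linarith : (0:ℝ) ≤ L2) (by linarith : (0:ℝ) ≤ M/t)
        have eU : 2*U = 2*((M/t)*(CW*Cf*X*L2)) := by rw [hUdef]; ring
        rw [eU]
        have h31 : 3*Real.log 2*L2 ≤ 3*L2 := by
          calc 3*Real.log 2*L2 = (3*Real.log 2)*L2 := by ring
          _ ≤ 3*L2 := mul_le_mul_of_nonneg_right (by linarith) (by linarith)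
        linarith
      have h5ab : (5:ℝ) ≤ 4*a+b := by linarith
      have h2cf : (2:ℝ) ≤ 1+CW*Cf := by linarith
      have hZ10 : (10:ℝ) ≤ (4*a+b)*(1+CW*Cf) := by
        have := mul_le_mul h5ab h2cf (by norm_num) (by linarith)
        linarith
      have hRHS : 20 * M * (4*a+b) * CW * Cf * (1+CW*Cf) / t * X * (2*L2)
          = 40*((4*a+b)*(1+CW*Cf))*U := by
        rw [hUdef]
        ring
      calc M/t + ((V/t)+1)*(3*Real.log 2*L2)
          = M/t + (V/t)*(3*Real.log 2*L2) + 3*Real.log 2*L2 := by ring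
      _ ≤ U + 3*U + 2*U := by linarith
      _ = 6*U := by ring
      _ ≤ 40*((4*a+b)*(1+CW*Cf))*U := by
          nlinarith [mul_le_mul_of_nonneg_right hZ10 hU0]
          
      _ = 20 * M * (4*a+b) * CW * Cf * (1+CW*Cf) / t * X * (2*L2) := hRHS.symm
    calc Real.log (coverNum M t {u : ZMod N × ZMod N → ℝ |
        (∀ k, u k ∈ Set.Icc (0:ℝ) M) ∧ wnormW r N L lam u ≤ wnormW r N L lam f})
        ≤ Real.log K := hlog1
    _ ≤ M/t + ((V/t)+1)*(3*Real.log 2*L2) := hlogK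
    _ ≤ 20 * M * (4*a+b) * CW * Cf * (1+CW*Cf) / t * X * (2*L2) := hfinal

end WFrame
end
end

section
/- For every integer r ≥ 1 there exists a constant C_W ≥ 1, depending only on r (in particular independent of N and of the number of decomposition levels L), such that for all integers N ≥ 2, L ≥ 1 and all u : Ω → ℝ one has ‖∇u‖₁ ≤ C_W·‖Wu‖₁. -/
noncomputable section

open scoped BigOperators

namespace WFrame

open Finsupp AddMonoidAlgebra

abbrev R1 : Type := AddMonoidAlgebra ℝ ℤ
abbrev A2 : Type := AddMonoidAlgebra ℝ (ℤ × ℤ)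

/-- identity cast from Finsupp to AddMonoidAlgebra -/
def toR {G : Type*} : (G →₀ ℝ) → AddMonoidAlgebra ℝ G := fun x => AddMonoidAlgebra.ofCoeff x

instance instCoeFunAMA {G : Type*} : CoeFun (AddMonoidAlgebra ℝ G) (fun _ => G → ℝ) :=
  ⟨fun x => x.coeff⟩

lemma toR_single {G : Type*} (a : G) (c : ℝ) :
    toR (Finsupp.single a c) = AddMonoidAlgebra.single a c := rfl

lemma toR_add {G : Type*} (a b : G →₀ ℝ) : toR (a + b) = toR a + toR b := rfl

lemma toR_smul {G : Type*} (c : ℝ) (a : G →₀ ℝ) : toR (c • a) = c • toR a := rfl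

lemma toR_inj {G : Type*} {a b : G →₀ ℝ} (h : toR a = toR b) : a = b := AddMonoidAlgebra.ofCoeff_injective h

lemma toR_fconv {G : Type*} [AddMonoid G] (f g : G →₀ ℝ) :
    toR (fconv f g) = toR f * toR g := by
  rw [AddMonoidAlgebra.mul_def]
  simp only [toR, fconv, AddMonoidAlgebra.ofCoeff_finsuppSum, AddMonoidAlgebra.ofCoeff_single,
    AddMonoidAlgebra.coeff_ofCoeff]

lemma toR_fpow {G : Type*} [AddMonoid G] (f : G →₀ ℝ) (n : ℕ) :
    toR (fpow f n) = (toR f) ^ n := by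
  induction n with
  | zero => rw [pow_zero]; rfl
  | succ n ih => rw [pow_succ, ← ih]; exact toR_fconv _ _

/-- the algebra map ℝ → R1 -/
abbrev Cm : ℝ →+* R1 := algebraMap ℝ R1

lemma Cm_apply (c : ℝ) : Cm c = AddMonoidAlgebra.single 0 c := by
  rw [Algebra.algebraMap_eq_smul_one, AddMonoidAlgebra.one_def]
  rw [AddMonoidAlgebra.smul_single, smul_eq_mul, mul_one]

lemma smul_eq_Cm_mul (c : ℝ) (x : R1) : c • x = Cm c * x :=
  Algebra.smul_def c x

lemma shift_eq (j : ℤ) (x : ℤ →₀ ℝ) :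
    toR (Finsupp.mapDomain (· + j) x) = AddMonoidAlgebra.single j (1:ℝ) * toR x := by
  rw [AddMonoidAlgebra.mul_def, AddMonoidAlgebra.coeff_single, Finsupp.sum_single_index]
  · simp only [toR, Finsupp.mapDomain, AddMonoidAlgebra.ofCoeff_finsuppSum,
      AddMonoidAlgebra.ofCoeff_single, AddMonoidAlgebra.coeff_ofCoeff]
    exact Finsupp.sum_congr fun a _ => by rw [one_mul, add_comm]
  · simp [Finsupp.sum]

lemma aF_zero_eq (r : ℕ) :
    toR (aF r 0) = Cm ((2:ℝ) ^ (-(r:ℤ))) * (AddMonoidAlgebra.single (jr r) 1 * (toR pF) ^ r) := by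
  rw [aF, if_pos rfl, toR_smul, smul_eq_Cm_mul, shift_eq, toR_fpow]

lemma aF_pos_eq (r α : ℕ) (hα : α ≠ 0) :
    toR (aF r α) = Cm ((-1:ℝ) ^ (α + 1) * (2:ℝ) ^ (-(r:ℤ)) * Real.sqrt (r.choose α)) *
      (AddMonoidAlgebra.single (jr r) 1 * ((toR qF) ^ α * (toR pF) ^ (r - α))) := by
  rw [aF, if_neg hα, toR_smul, smul_eq_Cm_mul, shift_eq, toR_fconv, toR_fpow, toR_fpow,
    mul_comm ((toR pF)^(r-α))]

lemma sF_ne (r α : ℕ) (hα : α ≤ r) :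
    ((-1:ℝ) ^ (α + 1) * (2:ℝ) ^ (-(r:ℤ)) * Real.sqrt (r.choose α)) ≠ 0 := by
  have h1 : ((-1:ℝ) ^ (α + 1)) ≠ 0 := pow_ne_zero _ (by norm_num)
  have h2 : ((2:ℝ) ^ (-(r:ℤ))) ≠ 0 := zpow_ne_zero _ (by norm_num)
  have h3 : Real.sqrt (r.choose α) ≠ 0 := by
    have := Nat.choose_pos hα
    positivity
  exact mul_ne_zero (mul_ne_zero h1 h2) h3

lemma Eg_mul_Eg (a b : ℤ) :
    (AddMonoidAlgebra.single a (1:ℝ)) * AddMonoidAlgebra.single b (1:ℝ)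
      = AddMonoidAlgebra.single (a+b) (1:ℝ) := by
  rw [AddMonoidAlgebra.single_mul_single, one_mul]

/-- representation: Q^k * P^(r-k) is a unit multiple of aF r k -/
lemma rep (r k : ℕ) (hk : k ≤ r) :
    ∃ c : R1, (toR qF) ^ k * (toR pF) ^ (r - k) = c * toR (aF r k) := by
  rcases Nat.eq_zero_or_pos k with rfl | hk0
  · refine ⟨Cm ((2:ℝ) ^ (r:ℤ)) * AddMonoidAlgebra.single (-(jr r)) 1, ?_⟩
    rw [aF_zero_eq]
    have h2 : ((2:ℝ) ^ (r:ℤ)) * ((2:ℝ) ^ (-(r:ℤ))) = 1 := by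
      rw [← zpow_add₀ (by norm_num : (2:ℝ) ≠ 0)]; simp
    calc (toR qF)^0 * (toR pF)^(r-0) = (toR pF)^r := by rw [pow_zero, one_mul, Nat.sub_zero]
    _ = (Cm ((2:ℝ)^(r:ℤ)) * Cm ((2:ℝ)^(-(r:ℤ)))) * ((AddMonoidAlgebra.single (-(jr r)) 1 * AddMonoidAlgebra.single (jr r) 1) * (toR pF)^r) := by
        rw [← map_mul, h2, map_one, Eg_mul_Eg, neg_add_cancel,
          ← AddMonoidAlgebra.one_def, one_mul, one_mul]
    _ = _ := by ring
  · set s := ((-1:ℝ) ^ (k + 1) * (2:ℝ) ^ (-(r:ℤ)) * Real.sqrt (r.choose k)) with hs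
    have hsne : s ≠ 0 := sF_ne r k hk
    refine ⟨Cm s⁻¹ * AddMonoidAlgebra.single (-(jr r)) 1, ?_⟩
    rw [aF_pos_eq r k (by omega : k ≠ 0)]
    calc (toR qF)^k * (toR pF)^(r-k)
        = (Cm s⁻¹ * Cm s) * ((AddMonoidAlgebra.single (-(jr r)) 1 * AddMonoidAlgebra.single (jr r) 1) * ((toR qF)^k * (toR pF)^(r-k))) := by
          rw [← map_mul, inv_mul_cancel₀ hsne, map_one, Eg_mul_Eg,
            neg_add_cancel, ← AddMonoidAlgebra.one_def, one_mul, one_mul]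
    _ = _ := by ring

lemma qF_add_pF : toR qF + toR pF = Cm 2 := by
  have : qF + pF = Finsupp.single 0 2 := by
    ext a
    rw [qF, pF]
    simp only [Finsupp.add_apply, Finsupp.sub_apply, Finsupp.single_apply]
    split <;> split <;> simp_all <;> ring
  rw [← toR_add, this, toR_single, Cm_apply]

/-- the partition-of-unity identity -/
lemma key2 (r : ℕ) :
    (1 : R1) = ∑ k ∈ Finset.range (r+1),
      Cm ((2:ℝ) ^ (-(r:ℤ)) * (r.choose k : ℝ)) * ((toR qF) ^ k * (toR pF) ^ (r - k)) := by
  have h := add_pow (toR qF) (toR pF) r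
  rw [qF_add_pF, ← map_pow] at h
  calc (1 : R1) = Cm ((2:ℝ)^(-(r:ℤ))) * Cm ((2:ℝ)^r) := by
        rw [← map_mul]
        have : (2:ℝ)^(-(r:ℤ)) * (2:ℝ)^r = 1 := by
          rw [← zpow_natCast (2:ℝ) r, ← zpow_add₀ (by norm_num : (2:ℝ) ≠ 0)]; simp
        rw [this, map_one]
  _ = Cm ((2:ℝ)^(-(r:ℤ))) * ∑ k ∈ Finset.range (r+1), (toR qF)^k * (toR pF)^(r-k) * (r.choose k : R1) := by rw [h]
  _ = _ := by
      rw [Finset.mul_sum]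
      refine Finset.sum_congr rfl fun k _ => ?_
      rw [map_mul, ← map_natCast Cm (r.choose k)]
      ring

end WFrame

namespace WFrame
open Finsupp AddMonoidAlgebra

/-- δ₀ decomposes over all filters a_0,…,a_r -/
lemma one_decomp (r : ℕ) :
    ∃ c : ℕ → R1, (1 : R1) = ∑ k ∈ Finset.range (r+1), c k * toR (aF r k) := by
  classical
  choose cc hcc using fun k (hk : k ≤ r) => rep r k hk
  refine ⟨fun k => if hk : k ≤ r then
      Cm ((2:ℝ) ^ (-(r:ℤ)) * (r.choose k : ℝ)) * cc k hk else 0, ?_⟩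
  rw [key2 r]
  refine Finset.sum_congr rfl fun k hk => ?_
  have hk' : k ≤ r := by simpa using Nat.lt_succ_iff.mp (Finset.mem_range.mp hk)
  simp only [dif_pos hk', hcc k hk']
  ring

/-- q·a_0 is a multiple of a_1 -/
lemma q_aF0 (r : ℕ) (hr : 1 ≤ r) :
    ∃ t : R1, toR qF * toR (aF r 0) = t * toR (aF r 1) := by
  obtain ⟨c, hc⟩ := rep r 1 hr
  refine ⟨Cm ((2:ℝ) ^ (-(r:ℤ))) * (AddMonoidAlgebra.single (jr r) 1 * (toR pF * c)), ?_⟩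
  rw [aF_zero_eq]
  have hP : (toR pF) ^ r = (toR pF) ^ (r - 1) * toR pF := by
    conv_lhs => rw [show r = (r-1) + 1 by omega]
    rw [pow_succ]
  calc toR qF * (Cm ((2:ℝ)^(-(r:ℤ))) * (AddMonoidAlgebra.single (jr r) 1 * toR pF ^ r))
      = Cm ((2:ℝ)^(-(r:ℤ))) * (AddMonoidAlgebra.single (jr r) 1 * (toR pF * (toR qF ^ 1 * toR pF ^ (r-1)))) := by
        rw [hP, pow_one]
        ring
  _ = _ := by rw [hc]; ring

/-- q decomposes over the filters a_1,…,a_r -/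
lemma q_decomp (r : ℕ) (hr : 1 ≤ r) :
    ∃ g : ℕ → R1, toR qF = ∑ k ∈ Finset.Icc 1 r, g k * toR (aF r k) := by
  classical
  obtain ⟨c, hc⟩ := one_decomp r
  obtain ⟨t, ht⟩ := q_aF0 r hr
  refine ⟨fun k => (if k = 1 then c 0 * t else 0) + toR qF * c k, ?_⟩
  have hsplit : Finset.range (r+1) = insert 0 (Finset.Icc 1 r) := by
    ext x
    simp only [Finset.mem_range, Finset.mem_Icc, Finset.mem_insert]
    omega
  have h0 : (0:ℕ) ∉ Finset.Icc 1 r := by simp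
  have main : toR qF = (c 0 * t) * toR (aF r 1)
      + ∑ k ∈ Finset.Icc 1 r, (toR qF * c k) * toR (aF r k) := by
    calc toR qF = toR qF * 1 := (mul_one _).symm
    _ = toR qF * ∑ k ∈ Finset.range (r+1), c k * toR (aF r k) := by rw [← hc]
    _ = toR qF * (c 0 * toR (aF r 0)) + ∑ k ∈ Finset.Icc 1 r, toR qF * (c k * toR (aF r k)) := by
        rw [hsplit, Finset.sum_insert h0, mul_add, Finset.mul_sum]
    _ = _ := by
        rw [show toR qF * (c 0 * toR (aF r 0)) = c 0 * (toR qF * toR (aF r 0)) by ring, ht]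
        congr 1
        · ring
        · exact Finset.sum_congr rfl fun k _ => by ring
  conv_lhs => rw [main]
  have h1 : ∀ k ∈ Finset.Icc 1 r,
      ((if k = 1 then c 0 * t else 0) + toR qF * c k) * toR (aF r k)
        = (if k = 1 then (c 0 * t) * toR (aF r k) else 0) + (toR qF * c k) * toR (aF r k) := by
    intro k _
    split <;> simp [add_mul]
  rw [Finset.sum_congr rfl h1, Finset.sum_add_distrib,
    Finset.sum_ite_eq' (Finset.Icc 1 r) 1 (fun k => (c 0 * t) * toR (aF r k)),
    if_pos (by simp [hr] : (1:ℕ) ∈ Finset.Icc 1 r)]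

end WFrame

namespace WFrame
open Finsupp AddMonoidAlgebra

/-- embedding of the first coordinate -/
def i1 : R1 →+* A2 := AddMonoidAlgebra.mapDomainRingHom ℝ (AddMonoidHom.inl ℤ ℤ)
/-- embedding of the second coordinate -/
def i2 : R1 →+* A2 := AddMonoidAlgebra.mapDomainRingHom ℝ (AddMonoidHom.inr ℤ ℤ)

lemma toR_zero {G : Type*} : toR (0 : G →₀ ℝ) = 0 := rfl

lemma tens2_apply (f g : ℤ →₀ ℝ) (k : ℤ × ℤ) : tens2 f g k = f k.1 * g k.2 := rfl

lemma tens2_zero_left (g : ℤ →₀ ℝ) : tens2 0 g = 0 := by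
  ext k; simp [tens2_apply]

lemma tens2_add_left (f f' g : ℤ →₀ ℝ) : tens2 (f + f') g = tens2 f g + tens2 f' g := by
  ext k; simp [tens2_apply, add_mul]

lemma tens2_zero_right (f : ℤ →₀ ℝ) : tens2 f 0 = 0 := by
  ext k; simp [tens2_apply]

lemma tens2_add_right (f g g' : ℤ →₀ ℝ) : tens2 f (g + g') = tens2 f g + tens2 f g' := by
  ext k; simp [tens2_apply, mul_add]

lemma tens2_single_single (a b : ℤ) (c d : ℝ) :
    tens2 (Finsupp.single a c) (Finsupp.single b d) = Finsupp.single ((a,b) : ℤ × ℤ) (c * d) := by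
  ext k
  rcases k with ⟨k1, k2⟩
  rw [tens2_apply]
  simp only [Finsupp.single_apply, Prod.mk.injEq, ite_and, mul_ite, ite_mul,
    mul_zero, zero_mul]
  split <;> split <;> simp_all

lemma i1_single (a : ℤ) (c : ℝ) :
    i1 (AddMonoidAlgebra.single a c) = AddMonoidAlgebra.single ((a, 0) : ℤ × ℤ) c := by
  simp only [i1, AddMonoidAlgebra.mapDomainRingHom_apply, AddMonoidAlgebra.mapDomain_single]
  rfl

lemma i2_single (a : ℤ) (c : ℝ) :
    i2 (AddMonoidAlgebra.single a c) = AddMonoidAlgebra.single ((0, a) : ℤ × ℤ) c := by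
  simp only [i2, AddMonoidAlgebra.mapDomainRingHom_apply, AddMonoidAlgebra.mapDomain_single]
  rfl

lemma toR_tens2_single (a : ℤ) (c : ℝ) (g : ℤ →₀ ℝ) :
    toR (tens2 (Finsupp.single a c) g) = i1 (AddMonoidAlgebra.single a c) * i2 (toR g) := by
  induction g using Finsupp.induction with
  | zero => rw [tens2_zero_right, toR_zero, toR_zero, map_zero, mul_zero]
  | single_add b d g hbg hd ih =>
      rw [tens2_add_right, toR_add, ih, toR_add, map_add, mul_add]
      congr 1
      rw [tens2_single_single, toR_single, toR_single, i1_single, i2_single,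
        AddMonoidAlgebra.single_mul_single]
      congr 1
      simp [Prod.ext_iff]

lemma toR_tens2 (f g : ℤ →₀ ℝ) : toR (tens2 f g) = i1 (toR f) * i2 (toR g) := by
  induction f using Finsupp.induction with
  | zero => rw [tens2_zero_left, toR_zero, toR_zero, map_zero, zero_mul]
  | single_add a c f haf hc ih =>
      rw [tens2_add_left, toR_add, ih, toR_add, map_add, add_mul, toR_tens2_single, toR_single]

lemma toR_a2 (r : ℕ) (α : ℕ × ℕ) :
    toR (a2 r α) = i1 (toR (aF r α.1)) * i2 (toR (aF r α.2)) := toR_tens2 _ _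

/-- decomposition of the horizontal difference filter over the band filters -/
lemma d1_decomp (r : ℕ) (hr : 1 ≤ r) :
    ∃ h : ℕ × ℕ → A2, i1 (toR qF) = ∑ α ∈ Band r, h α * toR (a2 r α) := by
  classical
  obtain ⟨g, hg⟩ := q_decomp r hr
  obtain ⟨c, hc⟩ := one_decomp r
  set s : Finset (ℕ × ℕ) := Finset.Icc 1 r ×ˢ Finset.range (r+1) with hs
  have hsub : s ⊆ Band r := by
    intro α hα
    rw [hs, Finset.mem_product, Finset.mem_Icc, Finset.mem_range] at hα
    rw [Band, Finset.mem_erase, Finset.mem_product, Finset.mem_range, Finset.mem_range]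
    refine ⟨?_, by omega, hα.2⟩
    intro hα0
    rw [Prod.ext_iff] at hα0
    simp at hα0
    omega
  refine ⟨fun α => if α ∈ s then i1 (g α.1) * i2 (c α.2) else 0, ?_⟩
  have key : i1 (toR qF) = ∑ α ∈ s, (i1 (g α.1) * i2 (c α.2)) * toR (a2 r α) := by
    calc i1 (toR qF) = i1 (toR qF) * i2 (1 : R1) := by rw [map_one, mul_one]
    _ = (∑ k ∈ Finset.Icc 1 r, i1 (g k) * i1 (toR (aF r k)))
        * (∑ k ∈ Finset.range (r+1), i2 (c k) * i2 (toR (aF r k))) := by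
        rw [hg, hc]
        simp only [map_sum, map_mul]
    _ = ∑ k1 ∈ Finset.Icc 1 r, ∑ k2 ∈ Finset.range (r+1),
          (i1 (g k1) * i1 (toR (aF r k1))) * (i2 (c k2) * i2 (toR (aF r k2))) := by
        rw [Finset.sum_mul_sum]
    _ = _ := by
        rw [hs, Finset.sum_product]
        refine Finset.sum_congr rfl fun k1 _ => Finset.sum_congr rfl fun k2 _ => ?_
        rw [toR_a2]
        ring
  rw [key]
  have h1 : ∑ α ∈ Band r, (if α ∈ s then i1 (g α.1) * i2 (c α.2) else 0) * toR (a2 r α)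
      = ∑ α ∈ s, (if α ∈ s then i1 (g α.1) * i2 (c α.2) else 0) * toR (a2 r α) :=
    (Finset.sum_subset hsub (fun α _ hα => by rw [if_neg hα, zero_mul])).symm
  exact (h1.trans (Finset.sum_congr rfl fun α hα => by rw [if_pos hα])).symm

/-- decomposition of the vertical difference filter over the band filters -/
lemma d2_decomp (r : ℕ) (hr : 1 ≤ r) :
    ∃ h : ℕ × ℕ → A2, i2 (toR qF) = ∑ α ∈ Band r, h α * toR (a2 r α) := by
  classical
  obtain ⟨g, hg⟩ := q_decomp r hr
  obtain ⟨c, hc⟩ := one_decomp r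
  set s : Finset (ℕ × ℕ) := Finset.range (r+1) ×ˢ Finset.Icc 1 r with hs
  have hsub : s ⊆ Band r := by
    intro α hα
    rw [hs, Finset.mem_product, Finset.mem_Icc, Finset.mem_range] at hα
    rw [Band, Finset.mem_erase, Finset.mem_product, Finset.mem_range, Finset.mem_range]
    refine ⟨?_, hα.1, by omega⟩
    intro hα0
    rw [Prod.ext_iff] at hα0
    simp at hα0
    omega
  refine ⟨fun α => if α ∈ s then i1 (c α.1) * i2 (g α.2) else 0, ?_⟩
  have key : i2 (toR qF) = ∑ α ∈ s, (i1 (c α.1) * i2 (g α.2)) * toR (a2 r α) := by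
    calc i2 (toR qF) = i1 (1 : R1) * i2 (toR qF) := by rw [map_one, one_mul]
    _ = (∑ k ∈ Finset.range (r+1), i1 (c k) * i1 (toR (aF r k)))
        * (∑ k ∈ Finset.Icc 1 r, i2 (g k) * i2 (toR (aF r k))) := by
        rw [hg, hc]
        simp only [map_sum, map_mul]
    _ = ∑ k1 ∈ Finset.range (r+1), ∑ k2 ∈ Finset.Icc 1 r,
          (i1 (c k1) * i1 (toR (aF r k1))) * (i2 (g k2) * i2 (toR (aF r k2))) := by
        rw [Finset.sum_mul_sum]
    _ = _ := by
        rw [hs, Finset.sum_product]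
        refine Finset.sum_congr rfl fun k1 _ => Finset.sum_congr rfl fun k2 _ => ?_
        rw [toR_a2]
        ring
  rw [key]
  have h1 : ∑ α ∈ Band r, (if α ∈ s then i1 (c α.1) * i2 (g α.2) else 0) * toR (a2 r α)
      = ∑ α ∈ s, (if α ∈ s then i1 (c α.1) * i2 (g α.2) else 0) * toR (a2 r α) :=
    (Finset.sum_subset hsub (fun α _ hα => by rw [if_neg hα, zero_mul])).symm
  exact (h1.trans (Finset.sum_congr rfl fun α hα => by rw [if_pos hα])).symm

end WFrame

namespace WFrame
open Finsupp

/-- identity cast from AddMonoidAlgebra to Finsupp -/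
def fromR {G : Type*} : AddMonoidAlgebra ℝ G → (G →₀ ℝ) := fun x => x.coeff

lemma fromR_toR {G : Type*} (a : G →₀ ℝ) : fromR (toR a) = a := rfl
lemma toR_fromR {G : Type*} (a : AddMonoidAlgebra ℝ G) : toR (fromR a) = a := rfl

/-- reflection as ring hom -/
def nR : A2 →+* A2 :=
  AddMonoidAlgebra.mapDomainRingHom ℝ (negAddMonoidHom : ℤ × ℤ →+ ℤ × ℤ)

lemma refl2_eq (a : (ℤ × ℤ) →₀ ℝ) : refl2 a = fromR (nR (toR a)) := rfl

lemma nR_single (m : ℤ × ℤ) (c : ℝ) :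
    nR (AddMonoidAlgebra.single m c) = AddMonoidAlgebra.single (-m) c := by
  simp [nR]

/-- the coordinatewise cast ℤ² → (ℤ/N)² -/
def castT (N : ℕ) : ℤ × ℤ →+ (ZMod N × ZMod N) :=
  (Int.castAddHom (ZMod N)).prodMap (Int.castAddHom (ZMod N))

lemma castT_apply (N : ℕ) (m : ℤ × ℤ) :
    castT N m = ((m.1 : ZMod N), (m.2 : ZMod N)) := rfl

/-- periodization as ring hom -/
def PmR (N : ℕ) : A2 →+* AddMonoidAlgebra ℝ (ZMod N × ZMod N) :=
  AddMonoidAlgebra.mapDomainRingHom ℝ (castT N)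

lemma PmR_single (N : ℕ) (m : ℤ × ℤ) (c : ℝ) :
    PmR N (AddMonoidAlgebra.single m c)
      = AddMonoidAlgebra.single (((m.1 : ZMod N), (m.2 : ZMod N))) c := by
  simp [PmR, castT_apply]

lemma per_eq (N : ℕ) (a : (ℤ × ℤ) →₀ ℝ) (k : ZMod N × ZMod N) :
    per N a k = PmR N (toR a) k := by
  classical
  rw [per]
  show _ = (Finsupp.mapDomain (castT N) a) k
  rw [Finsupp.mapDomain, Finsupp.sum_apply, Finsupp.sum]
  refine Finset.sum_congr rfl fun m _ => ?_
  rw [Finsupp.single_apply, castT_apply]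

lemma pconv_eq (N : ℕ) [NeZero N] (a : (ℤ × ℤ) →₀ ℝ) (u : ZMod N × ZMod N → ℝ)
    (k : ZMod N × ZMod N) :
    pconv N a u k = ∑ n : ZMod N × ZMod N, PmR N (toR a) (k - n) * u n := by
  rw [pconv]
  exact Finset.sum_congr rfl fun n _ => by rw [per_eq]

/-- convolution product formula on the torus -/
lemma mul_apply_torus {T : Type*} [AddCommGroup T] [Fintype T] [DecidableEq T]
    (A B : AddMonoidAlgebra ℝ T) (j : T) :
    (A * B) j = ∑ x : T, A x * B (j - x) := by
  classical
  rw [AddMonoidAlgebra.mul_def]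
  simp only [AddMonoidAlgebra.coeff_finsuppSum, AddMonoidAlgebra.coeff_single]
  rw [Finsupp.sum_apply, Finsupp.sum]
  have inner : ∀ a : T, (Finsupp.sum B.coeff fun b d => Finsupp.single (a + b) (A a * d)) j
      = A a * B (j - a) := by
    intro a
    rw [Finsupp.sum_apply, Finsupp.sum]
    have hcond : ∀ b : T, (a + b = j) ↔ (b = j - a) :=
      fun b => ⟨fun h => eq_sub_of_add_eq' h, fun h => by rw [h]; exact add_sub_cancel _ _⟩
    have step : ∀ b ∈ B.coeff.support,
        (Finsupp.single (a + b) (A a * B b)) j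
          = if b = j - a then A a * B b else 0 := by
      intro b _
      rw [Finsupp.single_apply]
      exact ite_congr (by rw [eq_comm, ← hcond b, eq_comm]) (fun _ => rfl) (fun _ => rfl)
    rw [Finset.sum_congr rfl step, Finset.sum_ite_eq' B.coeff.support (j - a)
      (fun b => A a * B b)]
    by_cases hmem : j - a ∈ B.coeff.support
    · rw [if_pos hmem]
    · rw [if_neg hmem, Finsupp.notMem_support_iff.mp hmem, mul_zero]
  calc ∑ a ∈ A.coeff.support, (Finsupp.sum B.coeff fun b d => Finsupp.single (a+b) (A a * d)) j
      = ∑ a ∈ A.coeff.support, A a * B (j - a) :=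
        Finset.sum_congr rfl fun a _ => inner a
  _ = ∑ a : T, A a * B (j - a) := by
      refine Finset.sum_subset (Finset.subset_univ _) fun a _ ha => ?_
      rw [Finsupp.notMem_support_iff.mp ha, zero_mul]

/-- convolution with a single -/
lemma sum_single_mul {T : Type*} [AddCommGroup T] [Fintype T] [DecidableEq T]
    (t : T) (c : ℝ) (u : T → ℝ) (k : T) :
    ∑ n : T, (Finsupp.single t c) (k - n) * u n = c * u (k - t) := by
  have hcond : ∀ n : T, (t = k - n) ↔ (n = k - t) :=
    fun n => ⟨fun h => by rw [h]; abel, fun h => by rw [h]; abel⟩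
  have step : ∀ n : T, (Finsupp.single t c) (k - n) * u n
      = if n = k - t then c * u n else 0 := by
    intro n
    rw [Finsupp.single_apply,
      ite_congr (by rw [hcond n]) (fun _ => rfl) (fun _ => rfl), ite_mul, zero_mul]
  rw [Finset.sum_congr rfl fun n _ => step n,
    Finset.sum_ite_eq' Finset.univ (k - t) (fun n => c * u n), if_pos (Finset.mem_univ _)]

end WFrame

namespace WFrame
open Finsupp

/-- ℓ¹ norm of a finitely supported filter -/
def nrm {G : Type*} (a : G →₀ ℝ) : ℝ := ∑ m ∈ a.support, |a m|

lemma nrm_nonneg {G : Type*} (a : G →₀ ℝ) : 0 ≤ nrm a :=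
  Finset.sum_nonneg fun _ _ => abs_nonneg _

/-- pconv of a product filter is the composition -/
lemma pconv_mul (N : ℕ) [NeZero N] (X Y : A2) (u : ZMod N × ZMod N → ℝ)
    (k : ZMod N × ZMod N) :
    pconv N (fromR (X * Y)) u k = pconv N (fromR X) (pconv N (fromR Y) u) k := by
  classical
  rw [pconv_eq, pconv_eq]
  have h1 : ∀ n, PmR N (toR (fromR (X*Y))) (k - n) = (PmR N X * PmR N Y) (k - n) := by
    intro n
    rw [toR_fromR, map_mul]
  calc ∑ n, PmR N (toR (fromR (X*Y))) (k - n) * u n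
      = ∑ n, (∑ x, PmR N X x * PmR N Y (k - n - x)) * u n := by
        refine Finset.sum_congr rfl fun n _ => ?_
        rw [h1 n, mul_apply_torus]
  _ = ∑ n, ∑ x, PmR N X x * PmR N Y (k - n - x) * u n := by
        refine Finset.sum_congr rfl fun n _ => ?_
        rw [Finset.sum_mul]
  _ = ∑ x, ∑ n, PmR N X x * PmR N Y (k - n - x) * u n := Finset.sum_comm
  _ = ∑ x, ∑ n, PmR N X (k - x) * (PmR N Y (x - n) * u n) := by
        refine (Fintype.sum_equiv (Equiv.subLeft k) _ _ fun x => ?_)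
        refine Finset.sum_congr rfl fun n _ => ?_
        have e1 : k - (k - x) = x := by abel
        have e2 : k - n - x = k - x - n := by abel
        rw [Equiv.subLeft_apply, e1, e2, mul_assoc]
  _ = ∑ x, PmR N (toR (fromR X)) (k - x) * pconv N (fromR Y) u x := by
        refine Finset.sum_congr rfl fun x _ => ?_
        rw [pconv_eq]
        simp only [toR_fromR]
        rw [Finset.mul_sum]

/-- pconv of a finite sum of filters -/
lemma pconv_finsum (N : ℕ) [NeZero N] {ι : Type*} (s : Finset ι) (F : ι → A2)
    (u : ZMod N × ZMod N → ℝ) (k : ZMod N × ZMod N) :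
    pconv N (fromR (∑ α ∈ s, F α)) u k = ∑ α ∈ s, pconv N (fromR (F α)) u k := by
  classical
  rw [pconv_eq]
  have h1 : ∀ n, PmR N (toR (fromR (∑ α ∈ s, F α))) (k - n)
      = ∑ α ∈ s, PmR N (F α) (k - n) := by
    intro n
    rw [toR_fromR, map_sum, AddMonoidAlgebra.coeff_sum]
    exact Finsupp.finset_sum_apply s (fun α => (PmR N (F α)).coeff) (k - n)
  calc ∑ n, PmR N (toR (fromR (∑ α ∈ s, F α))) (k - n) * u n
      = ∑ n, ∑ α ∈ s, PmR N (F α) (k - n) * u n := by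
        refine Finset.sum_congr rfl fun n _ => ?_
        rw [h1 n, Finset.sum_mul]
  _ = ∑ α ∈ s, ∑ n, PmR N (F α) (k - n) * u n := Finset.sum_comm
  _ = _ := by
        refine Finset.sum_congr rfl fun α _ => ?_
        rw [pconv_eq]
        exact Finset.sum_congr rfl fun n _ => by rw [toR_fromR]

/-- ℓ¹ bound for the periodization -/
lemma per_l1 (N : ℕ) [NeZero N] (a : (ℤ × ℤ) →₀ ℝ) :
    ∑ j : ZMod N × ZMod N, |PmR N (toR a) j| ≤ nrm a := by
  classical
  have happ : ∀ j, PmR N (toR a) j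
      = ∑ m ∈ a.support, (if castT N m = j then a m else 0) := by
    intro j
    show (Finsupp.mapDomain (castT N) a) j = _
    rw [Finsupp.mapDomain, Finsupp.sum_apply, Finsupp.sum]
    exact Finset.sum_congr rfl fun m _ => Finsupp.single_apply
  calc ∑ j : ZMod N × ZMod N, |PmR N (toR a) j|
      ≤ ∑ j : ZMod N × ZMod N, ∑ m ∈ a.support, (if castT N m = j then |a m| else 0) := by
        refine Finset.sum_le_sum fun j _ => ?_
        rw [happ j]
        refine le_trans (Finset.abs_sum_le_sum_abs _ _) (le_of_eq ?_)
        refine Finset.sum_congr rfl fun m _ => ?_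
        split <;> simp
  _ = ∑ m ∈ a.support, ∑ j : ZMod N × ZMod N, (if castT N m = j then |a m| else 0) :=
        Finset.sum_comm
  _ = ∑ m ∈ a.support, |a m| := by
        refine Finset.sum_congr rfl fun m _ => ?_
        rw [Finset.sum_ite_eq Finset.univ (castT N m) (fun _ => |a m|),
          if_pos (Finset.mem_univ _)]
  _ = nrm a := rfl

/-- ℓ¹ bound for periodic convolution -/
lemma pconv_l1 (N : ℕ) [NeZero N] (a : (ℤ × ℤ) →₀ ℝ) (u : ZMod N × ZMod N → ℝ) :
    ∑ k : ZMod N × ZMod N, |pconv N a u k|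
      ≤ nrm a * ∑ n : ZMod N × ZMod N, |u n| := by
  classical
  calc ∑ k : ZMod N × ZMod N, |pconv N a u k|
      ≤ ∑ k : ZMod N × ZMod N, ∑ n : ZMod N × ZMod N, |PmR N (toR a) (k - n)| * |u n| := by
        refine Finset.sum_le_sum fun k _ => ?_
        rw [pconv_eq]
        refine le_trans (Finset.abs_sum_le_sum_abs _ _) (le_of_eq ?_)
        exact Finset.sum_congr rfl fun n _ => abs_mul _ _
  _ = ∑ n : ZMod N × ZMod N, ∑ k : ZMod N × ZMod N, |PmR N (toR a) (k - n)| * |u n| :=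
        Finset.sum_comm
  _ = ∑ n : ZMod N × ZMod N, (∑ j : ZMod N × ZMod N, |PmR N (toR a) j|) * |u n| := by
        refine Finset.sum_congr rfl fun n _ => ?_
        rw [Finset.sum_mul]
        refine Fintype.sum_equiv (Equiv.subRight n) _ _ fun k => ?_
        rw [Equiv.subRight_apply]
  _ ≤ ∑ n : ZMod N × ZMod N, nrm a * |u n| := by
        refine Finset.sum_le_sum fun n _ => ?_
        exact mul_le_mul_of_nonneg_right (per_l1 N a) (abs_nonneg _)
  _ = nrm a * ∑ n : ZMod N × ZMod N, |u n| := by rw [Finset.mul_sum]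

end WFrame

namespace WFrame
open Finsupp

lemma aLvl_zero (r : ℕ) (α : ℕ × ℕ) : aLvl r 0 α = a2 r α := by
  have hup : upSample 0 (a2 r α) = a2 r α := by
    rw [upSample]
    have hfun : (fun k : ℤ × ℤ => ((2 ^ 0 : ℤ) * k.1, (2 ^ 0 : ℤ) * k.2)) = id := by
      funext k
      simp
    rw [hfun, Finsupp.mapDomain_id]
  rw [aLvl, hup]
  apply toR_inj
  rw [toR_fconv]
  show _ = toR (a2 r α)
  have : toR (lowChain r 0) = 1 := by
    rw [lowChain]
    exact (AddMonoidAlgebra.one_def).symm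
  rw [this, mul_one]

lemma Wc_zero (r N : ℕ) [NeZero N] (α : ℕ × ℕ) (u : ZMod N × ZMod N → ℝ) :
    Wc r N 0 α u = pconv N (refl2 (a2 r α)) u := by
  rw [Wc, aLvl_zero]

lemma toR_qF : toR qF = AddMonoidAlgebra.single 0 1 - AddMonoidAlgebra.single 1 1 := rfl

lemma pconv_diff (N : ℕ) [NeZero N] (m : ℤ × ℤ) (X : A2)
    (hX : X = AddMonoidAlgebra.single 0 1 - AddMonoidAlgebra.single m 1)
    (u : ZMod N × ZMod N → ℝ) (k : ZMod N × ZMod N) :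
    pconv N (fromR (nR X)) u k
      = u k - u (k + ((m.1 : ZMod N), (m.2 : ZMod N))) := by
  classical
  rw [pconv_eq]
  simp only [toR_fromR]
  rw [hX, map_sub, nR_single, nR_single, map_sub, PmR_single, PmR_single]
  have hcast0 : ((((0:ℤ×ℤ).1 : ZMod N)), (((0:ℤ×ℤ).2 : ZMod N))) = ((0 : ZMod N), (0 : ZMod N)) := by
    norm_num
  calc ∑ n, ((AddMonoidAlgebra.single ((((-(0:ℤ×ℤ)).1 : ZMod N)), (((-(0:ℤ×ℤ)).2 : ZMod N))) 1
        - AddMonoidAlgebra.single ((((-m).1 : ZMod N)), (((-m).2 : ZMod N))) 1) : AddMonoidAlgebra ℝ (ZMod N × ZMod N)) (k - n) * u n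
      = ∑ n : ZMod N × ZMod N,
          ((Finsupp.single ((0 : ZMod N), (0 : ZMod N)) (1:ℝ)) (k - n) * u n
            - (Finsupp.single ((-(m.1 : ZMod N)), (-(m.2 : ZMod N))) (1:ℝ)) (k - n) * u n) := by
        refine Finset.sum_congr rfl fun n _ => ?_
        have : ∀ (A B : AddMonoidAlgebra ℝ (ZMod N × ZMod N)) (x : ZMod N × ZMod N),
            (A - B) x = A x - B x := fun A B x => Finsupp.sub_apply _ _ _
        rw [this, sub_mul]
        norm_num
  _ = u k - u (k + ((m.1 : ZMod N), (m.2 : ZMod N))) := by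
        rw [Finset.sum_sub_distrib, sum_single_mul, sum_single_mul, one_mul, one_mul]
        have e0 : k - ((0:ZMod N),(0:ZMod N)) = k := by
          rw [show ((0:ZMod N),(0:ZMod N)) = (0 : ZMod N × ZMod N) from rfl, sub_zero]
        have e1 : k - ((-(m.1 : ZMod N)), (-(m.2 : ZMod N))) = k + ((m.1 : ZMod N), (m.2 : ZMod N)) := by
          rw [show ((-(m.1 : ZMod N)), (-(m.2 : ZMod N))) = -(((m.1:ZMod N), (m.2:ZMod N)) : ZMod N × ZMod N) from rfl,
            sub_neg_eq_add]
        rw [e0, e1]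

lemma pconv_d1 (N : ℕ) [NeZero N] (u : ZMod N × ZMod N → ℝ) (k : ZMod N × ZMod N) :
    pconv N (fromR (nR (i1 (toR qF)))) u k = u k - u (k + ((1 : ZMod N), (0 : ZMod N))) := by
  have h : i1 (toR qF) = AddMonoidAlgebra.single ((0,0) : ℤ×ℤ) 1
      - AddMonoidAlgebra.single ((1,0) : ℤ×ℤ) 1 := by
    rw [toR_qF, map_sub, i1_single, i1_single]
  have := pconv_diff N ((1,0) : ℤ×ℤ) (i1 (toR qF)) (by rw [h]; norm_num; rfl) u k
  simpa using this

lemma pconv_d2 (N : ℕ) [NeZero N] (u : ZMod N × ZMod N → ℝ) (k : ZMod N × ZMod N) :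
    pconv N (fromR (nR (i2 (toR qF)))) u k = u k - u (k + ((0 : ZMod N), (1 : ZMod N))) := by
  have h : i2 (toR qF) = AddMonoidAlgebra.single ((0,0) : ℤ×ℤ) 1
      - AddMonoidAlgebra.single ((0,1) : ℤ×ℤ) 1 := by
    rw [toR_qF, map_sub, i2_single, i2_single]
  have := pconv_diff N ((0,1) : ℤ×ℤ) (i2 (toR qF)) (by rw [h]; norm_num; rfl) u k
  simpa using this

lemma sum_grid_le (N : ℕ) [NeZero N] (a b : ℕ) (ha : a ≤ N) (hb : b ≤ N)
    (f : ZMod N × ZMod N → ℝ) (hf : ∀ k, 0 ≤ f k) :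
    ∑ i ∈ Finset.range a, ∑ j ∈ Finset.range b, f ((i : ZMod N), (j : ZMod N))
      ≤ ∑ k : ZMod N × ZMod N, f k := by
  classical
  have hN0 : 0 < N := Nat.pos_of_ne_zero (NeZero.ne N)
  rw [← Finset.sum_product (s := Finset.range a) (t := Finset.range b)
    (f := fun p : ℕ × ℕ => f ((p.1 : ZMod N), (p.2 : ZMod N)))]
  have hinj : ∀ p ∈ Finset.range a ×ˢ Finset.range b, ∀ q ∈ Finset.range a ×ˢ Finset.range b,
      (fun p : ℕ × ℕ => (((p.1 : ZMod N), (p.2 : ZMod N)) : ZMod N × ZMod N)) p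
        = (fun p : ℕ × ℕ => (((p.1 : ZMod N), (p.2 : ZMod N)) : ZMod N × ZMod N)) q → p = q := by
    intro p hp q hq hpq
    rw [Finset.mem_product, Finset.mem_range, Finset.mem_range] at hp hq
    rw [Prod.ext_iff] at hpq ⊢
    simp only at hpq
    constructor
    · have := congrArg ZMod.val hpq.1
      rwa [ZMod.val_cast_of_lt (lt_of_lt_of_le hp.1 ha),
        ZMod.val_cast_of_lt (lt_of_lt_of_le hq.1 ha)] at this
    · have := congrArg ZMod.val hpq.2
      rwa [ZMod.val_cast_of_lt (lt_of_lt_of_le hp.2 hb),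
        ZMod.val_cast_of_lt (lt_of_lt_of_le hq.2 hb)] at this
  rw [← Finset.sum_image hinj]
  exact Finset.sum_le_sum_of_subset_of_nonneg (Finset.subset_univ _) fun k _ _ => hf k

lemma tv_le (N : ℕ) [NeZero N] (u : ZMod N × ZMod N → ℝ) :
    tv N u ≤ (∑ k : ZMod N × ZMod N, |pconv N (fromR (nR (i1 (toR qF)))) u k|)
      + ∑ k : ZMod N × ZMod N, |pconv N (fromR (nR (i2 (toR qF)))) u k| := by
  rw [tv]
  have h1 : ∑ i ∈ Finset.range (N - 1), ∑ j ∈ Finset.range N,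
      |u ((i : ZMod N) + 1, (j : ZMod N)) - u ((i : ZMod N), (j : ZMod N))|
      ≤ ∑ k : ZMod N × ZMod N, |pconv N (fromR (nR (i1 (toR qF)))) u k| := by
    have := sum_grid_le N (N-1) N (Nat.sub_le N 1) le_rfl
      (fun k => |pconv N (fromR (nR (i1 (toR qF)))) u k|) (fun k => abs_nonneg _)
    refine le_trans (le_of_eq ?_) this
    refine Finset.sum_congr rfl fun i _ => Finset.sum_congr rfl fun j _ => ?_
    show |u ((i:ZMod N) + 1, (j:ZMod N)) - u ((i:ZMod N), (j:ZMod N))|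
      = |pconv N (fromR (nR (i1 (toR qF)))) u ((i:ZMod N), (j:ZMod N))|
    rw [pconv_d1, Prod.mk_add_mk, add_zero, abs_sub_comm]
  have h2 : ∑ i ∈ Finset.range N, ∑ j ∈ Finset.range (N - 1),
      |u ((i : ZMod N), (j : ZMod N) + 1) - u ((i : ZMod N), (j : ZMod N))|
      ≤ ∑ k : ZMod N × ZMod N, |pconv N (fromR (nR (i2 (toR qF)))) u k| := by
    have := sum_grid_le N N (N-1) le_rfl (Nat.sub_le N 1)
      (fun k => |pconv N (fromR (nR (i2 (toR qF)))) u k|) (fun k => abs_nonneg _)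
    refine le_trans (le_of_eq ?_) this
    refine Finset.sum_congr rfl fun i _ => Finset.sum_congr rfl fun j _ => ?_
    show |u ((i:ZMod N), (j:ZMod N) + 1) - u ((i:ZMod N), (j:ZMod N))|
      = |pconv N (fromR (nR (i2 (toR qF)))) u ((i:ZMod N), (j:ZMod N))|
    rw [pconv_d2, Prod.mk_add_mk, add_zero, abs_sub_comm]
  exact add_le_add h1 h2

lemma level0_le_wnorm (r N L : ℕ) [NeZero N] (hL : 1 ≤ L) (u : ZMod N × ZMod N → ℝ) :
    ∑ α ∈ Band r, ∑ k : ZMod N × ZMod N, |Wc r N 0 α u k| ≤ wnorm1 r N L u := by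
  rw [wnorm1, ← Finset.sum_comm]
  refine Finset.sum_le_sum fun k _ => ?_
  refine Finset.single_le_sum (f := fun l => ∑ α ∈ Band r, |Wc r N l α u k|)
    (fun l _ => Finset.sum_nonneg fun α _ => abs_nonneg _) ?_
  simp [Finset.mem_range]
  omega

end WFrame

namespace WFrame
open Finsupp

lemma dir_bound (r N : ℕ) [NeZero N] (d : A2) (h : ℕ × ℕ → A2)
    (hd : d = ∑ α ∈ Band r, h α * toR (a2 r α)) (u : ZMod N × ZMod N → ℝ) :
    ∑ k : ZMod N × ZMod N, |pconv N (fromR (nR d)) u k|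
      ≤ ∑ α ∈ Band r, nrm (fromR (nR (h α))) * ∑ k : ZMod N × ZMod N, |Wc r N 0 α u k| := by
  classical
  have hrep : ∀ k, pconv N (fromR (nR d)) u k
      = ∑ α ∈ Band r, pconv N (fromR (nR (h α))) (Wc r N 0 α u) k := by
    intro k
    rw [hd, map_sum, pconv_finsum]
    refine Finset.sum_congr rfl fun α _ => ?_
    rw [map_mul, pconv_mul]
    congr 1
    rw [Wc_zero, refl2_eq]
  calc ∑ k : ZMod N × ZMod N, |pconv N (fromR (nR d)) u k|
      = ∑ k : ZMod N × ZMod N,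
          |∑ α ∈ Band r, pconv N (fromR (nR (h α))) (Wc r N 0 α u) k| :=
        Finset.sum_congr rfl fun k _ => by rw [hrep k]
  _ ≤ ∑ k : ZMod N × ZMod N, ∑ α ∈ Band r,
        |pconv N (fromR (nR (h α))) (Wc r N 0 α u) k| :=
        Finset.sum_le_sum fun k _ => Finset.abs_sum_le_sum_abs _ _
  _ = ∑ α ∈ Band r, ∑ k : ZMod N × ZMod N,
        |pconv N (fromR (nR (h α))) (Wc r N 0 α u) k| := Finset.sum_comm
  _ ≤ _ := Finset.sum_le_sum fun α _ => pconv_l1 N (fromR (nR (h α))) (Wc r N 0 α u)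

end WFrame

namespace WFrame

/-- for every r ≥ 1 there is `C_W ≥ 1` depending only on `r` such that
`‖∇u‖₁ ≤ C_W·‖Wu‖₁` for all grid sizes `N ≥ 2`, levels `L ≥ 1` and all `u`. -/
theorem stmt3 (r : ℕ) (hr : 1 ≤ r) :
    ∃ C : ℝ, 1 ≤ C ∧ ∀ (N : ℕ) (_hN : 2 ≤ N) (L : ℕ) (_hL : 1 ≤ L),
      haveI : NeZero N := ⟨by omega⟩
      ∀ u : ZMod N × ZMod N → ℝ, tv N u ≤ C * wnorm1 r N L u := by
  classical
  obtain ⟨h1d, hd1⟩ := d1_decomp r hr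
  obtain ⟨h2d, hd2⟩ := d2_decomp r hr
  set M : ℝ := ∑ α ∈ Band r, (nrm (fromR (nR (h1d α))) + nrm (fromR (nR (h2d α)))) with hM
  have hM0 : 0 ≤ M :=
    Finset.sum_nonneg fun α _ => add_nonneg (nrm_nonneg _) (nrm_nonneg _)
  refine ⟨1 + M, by linarith, ?_⟩
  intro N hN L hL
  haveI : NeZero N := ⟨by omega⟩
  intro u
  set S : ℕ × ℕ → ℝ := fun α => ∑ k : ZMod N × ZMod N, |Wc r N 0 α u k| with hS
  have hS0 : ∀ α, 0 ≤ S α := fun α => Finset.sum_nonneg fun k _ => abs_nonneg _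
  have step1 : tv N u ≤ ∑ α ∈ Band r, nrm (fromR (nR (h1d α))) * S α
      + ∑ α ∈ Band r, nrm (fromR (nR (h2d α))) * S α :=
    le_trans (tv_le N u)
      (add_le_add (dir_bound r N _ h1d hd1 u) (dir_bound r N _ h2d hd2 u))
  have step2 : ∑ α ∈ Band r, nrm (fromR (nR (h1d α))) * S α
      + ∑ α ∈ Band r, nrm (fromR (nR (h2d α))) * S α
      ≤ ∑ α ∈ Band r, (1 + M) * S α := by
    rw [← Finset.sum_add_distrib]
    refine Finset.sum_le_sum fun α hα => ?_
    rw [← add_mul]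
    refine mul_le_mul_of_nonneg_right ?_ (hS0 α)
    have hle : nrm (fromR (nR (h1d α))) + nrm (fromR (nR (h2d α))) ≤ M :=
      Finset.single_le_sum (f := fun β => nrm (fromR (nR (h1d β))) + nrm (fromR (nR (h2d β))))
        (fun β _ => add_nonneg (nrm_nonneg _) (nrm_nonneg _)) hα
    linarith
  have step3 : ∑ α ∈ Band r, (1 + M) * S α ≤ (1 + M) * wnorm1 r N L u := by
    rw [← Finset.mul_sum]
    refine mul_le_mul_of_nonneg_left ?_ (by linarith)
    exact level0_le_wnorm r N L hL u
  linarith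

end WFrame
end
end
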